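/- arXiv:1802.09230 — 7 statements merged into one kernel-verified Lean document; each statement's English description precedes it below -/
import Mathlib

section
/- Let d ≥ 1 and let Z be a nonempty set of vertices of the d-cube graph Q_d. Then the number of coordinates i ∈ {1,…,d} for which Z contains two vertices differing exactly in coordinate i (equivalently, the number of pairs of opposite facets of the d-cube associated with Z) is at most |Z| − 1. -/
/-- The `d`-cube graph: vertices are functions `Fin d → Bool`, two vertices
adjacent iff they differ in exactly one coordinate. -/
def cubeGraph (d : ℕ) : SimpleGraph (Fin d → Bool) where
  Adj x y := ∃ i, x i ≠ y i ∧ ∀ j, j ≠ i → x j = y j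
  symm := by
    constructor
    rintro x y ⟨i, hi, hj⟩
    exact ⟨i, fun h => hi h.symm, fun j hji => (hj j hji).symm⟩
  loopless := by
    constructor
    rintro x ⟨i, hi, -⟩
    exact hi rfl

private def rmap (d : ℕ) (x : Fin (d+1) → Bool) (j : Fin d) : Bool := x j.succ

private lemma rmap_injOn (d : ℕ) (Z : Finset (Fin (d+1) → Bool)) (b : Bool) :
    ∀ x ∈ Z.filter (fun z => z 0 = b), ∀ y ∈ Z.filter (fun z => z 0 = b),
      rmap d x = rmap d y → x = y := by
  intro x hx y hy hxy
  simp only [Finset.mem_filter] at hx hy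
  funext k
  refine Fin.cases ?_ ?_ k
  · rw [hx.2, hy.2]
  · intro j; exact congrFun hxy j

private lemma natlem0 (a c : ℕ) (h : a + 1 ≤ c) : a + min 1 c ≤ c := by omega

private lemma natlem1 (A S a0 a1 c0 c1 n : ℕ) (h1 : A ≤ S + 1) (h2 : S ≤ a0 + a1)
    (h3 : a0 + min 1 c0 ≤ c0) (h4 : a1 + min 1 c1 ≤ c1) (h5 : 1 ≤ c0) (h6 : 1 ≤ c1)
    (h7 : c0 + c1 = n) : A + 1 ≤ n := by omega

private lemma natlem2 (A S a0 a1 c0 c1 n : ℕ) (h1 : A ≤ S) (h2 : S ≤ a0 + a1)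
    (h3 : a0 + min 1 c0 ≤ c0) (h4 : a1 + min 1 c1 ≤ c1)
    (h7 : c0 + c1 = n) (hn : 1 ≤ n) : A + 1 ≤ n := by omega

private lemma cube_dirs_aux : ∀ (d : ℕ) (Z : Finset (Fin d → Bool)), Z.Nonempty →
    {i : Fin d | ∃ x ∈ Z, ∃ y ∈ Z, x i ≠ y i ∧ ∀ j, j ≠ i → x j = y j}.ncard + 1
      ≤ Z.card := by
  intro d
  induction d with
  | zero =>
    intro Z hZ
    have h0 : {i : Fin 0 | ∃ x ∈ Z, ∃ y ∈ Z, x i ≠ y i ∧ ∀ j, j ≠ i → x j = y j} = ∅ :=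
      Set.eq_empty_of_isEmpty _
    rw [h0, Set.ncard_empty]
    exact hZ.card_pos
  | succ d ih =>
    intro Z hZ
    classical
    have hsplit : (Z.filter (fun x => x 0 = false)).card
        + (Z.filter (fun x => x 0 = true)).card = Z.card := by
      have h : Z.filter (fun x => x 0 = true) = Z.filter (fun x => ¬ (x 0 = false)) := by
        apply Finset.filter_congr; intro x _; simp
      rw [h]
      exact Finset.card_filter_add_card_filter_not _
    -- per-half bound
    have hhalf : ∀ b : Bool,
        {i : Fin d | ∃ x ∈ (Z.filter (fun z => z 0 = b)).image (rmap d),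
            ∃ y ∈ (Z.filter (fun z => z 0 = b)).image (rmap d),
            x i ≠ y i ∧ ∀ j, j ≠ i → x j = y j}.ncard
          + min 1 (Z.filter (fun z => z 0 = b)).card
          ≤ (Z.filter (fun z => z 0 = b)).card := by
      intro b
      by_cases h : (Z.filter (fun z => z 0 = b)).Nonempty
      · have h1 := ih ((Z.filter (fun z => z 0 = b)).image (rmap d)) (h.image _)
        have h2 : ((Z.filter (fun z => z 0 = b)).image (rmap d)).card
            = (Z.filter (fun z => z 0 = b)).card :=
          Finset.card_image_of_injOn (rmap_injOn d Z b)
        rw [h2] at h1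
        exact natlem0 _ _ h1
      · have he : Z.filter (fun z => z 0 = b) = ∅ :=
          Finset.not_nonempty_iff_eq_empty.mp h
        have hDe : {i : Fin d | ∃ x ∈ (Z.filter (fun z => z 0 = b)).image (rmap d),
            ∃ y ∈ (Z.filter (fun z => z 0 = b)).image (rmap d),
            x i ≠ y i ∧ ∀ j, j ≠ i → x j = y j} = ∅ := by
          ext i; simp [he]
        rw [hDe, Set.ncard_empty, he]
        simp
    -- key inclusion for nonzero directions
    have hkey : ∀ k ∈ {i : Fin (d+1) | ∃ x ∈ Z, ∃ y ∈ Z, x i ≠ y i ∧ ∀ j, j ≠ i → x j = y j},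
        k ≠ 0 → k ∈ Fin.succ ''
          ({i : Fin d | ∃ x ∈ (Z.filter (fun z => z 0 = false)).image (rmap d),
              ∃ y ∈ (Z.filter (fun z => z 0 = false)).image (rmap d),
              x i ≠ y i ∧ ∀ j, j ≠ i → x j = y j}
           ∪ {i : Fin d | ∃ x ∈ (Z.filter (fun z => z 0 = true)).image (rmap d),
              ∃ y ∈ (Z.filter (fun z => z 0 = true)).image (rmap d),
              x i ≠ y i ∧ ∀ j, j ≠ i → x j = y j}) := by
      rintro k ⟨x, hx, y, hy, hne, hagr⟩ hk0
      obtain ⟨j, rfl⟩ := Fin.exists_succ_eq.mpr hk0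
      have h0 : x 0 = y 0 := hagr 0 (Ne.symm hk0)
      refine ⟨j, ?_, rfl⟩
      have hdiff : rmap d x j ≠ rmap d y j := hne
      have hag : ∀ j', j' ≠ j → rmap d x j' = rmap d y j' := fun j' hj' =>
        hagr j'.succ (fun h => hj' (Fin.succ_injective _ h))
      have hmem : ∀ b : Bool, x 0 = b →
          rmap d x ∈ (Z.filter (fun z => z 0 = b)).image (rmap d) ∧
          rmap d y ∈ (Z.filter (fun z => z 0 = b)).image (rmap d) :=
        fun b hb => ⟨Finset.mem_image_of_mem _ (Finset.mem_filter.mpr ⟨hx, hb⟩),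
          Finset.mem_image_of_mem _ (Finset.mem_filter.mpr ⟨hy, h0 ▸ hb⟩)⟩
      cases hb : x 0 with
      | false =>
        exact Or.inl ⟨rmap d x, (hmem false hb).1, rmap d y, (hmem false hb).2, hdiff, hag⟩
      | true =>
        exact Or.inr ⟨rmap d x, (hmem true hb).1, rmap d y, (hmem true hb).2, hdiff, hag⟩
    have hb0 := hhalf false
    have hb1 := hhalf true
    have himg : (Fin.succ ''
          ({i : Fin d | ∃ x ∈ (Z.filter (fun z => z 0 = false)).image (rmap d),
              ∃ y ∈ (Z.filter (fun z => z 0 = false)).image (rmap d),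
              x i ≠ y i ∧ ∀ j, j ≠ i → x j = y j}
           ∪ {i : Fin d | ∃ x ∈ (Z.filter (fun z => z 0 = true)).image (rmap d),
              ∃ y ∈ (Z.filter (fun z => z 0 = true)).image (rmap d),
              x i ≠ y i ∧ ∀ j, j ≠ i → x j = y j})).ncard
        ≤ {i : Fin d | ∃ x ∈ (Z.filter (fun z => z 0 = false)).image (rmap d),
              ∃ y ∈ (Z.filter (fun z => z 0 = false)).image (rmap d),
              x i ≠ y i ∧ ∀ j, j ≠ i → x j = y j}.ncard
          + {i : Fin d | ∃ x ∈ (Z.filter (fun z => z 0 = true)).image (rmap d),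
              ∃ y ∈ (Z.filter (fun z => z 0 = true)).image (rmap d),
              x i ≠ y i ∧ ∀ j, j ≠ i → x j = y j}.ncard :=
      le_trans (Set.ncard_image_le (Set.toFinite _)) (Set.ncard_union_le _ _)
    by_cases hboth : (Z.filter (fun z => z 0 = false)).Nonempty
        ∧ (Z.filter (fun z => z 0 = true)).Nonempty
    · -- both nonempty: use insert bound
      have hsub : {i : Fin (d+1) | ∃ x ∈ Z, ∃ y ∈ Z, x i ≠ y i ∧ ∀ j, j ≠ i → x j = y j}
          ⊆ insert 0 (Fin.succ '' ({i : Fin d | ∃ x ∈ (Z.filter (fun z => z 0 = false)).image (rmap d),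
              ∃ y ∈ (Z.filter (fun z => z 0 = false)).image (rmap d),
              x i ≠ y i ∧ ∀ j, j ≠ i → x j = y j}
           ∪ {i : Fin d | ∃ x ∈ (Z.filter (fun z => z 0 = true)).image (rmap d),
              ∃ y ∈ (Z.filter (fun z => z 0 = true)).image (rmap d),
              x i ≠ y i ∧ ∀ j, j ≠ i → x j = y j})) := by
        intro k hk
        by_cases hk0 : k = 0
        · exact hk0 ▸ Set.mem_insert _ _
        · exact Set.mem_insert_of_mem _ (hkey k hk hk0)
      have hle := le_trans (Set.ncard_le_ncard hsub (Set.toFinite _))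
        (Set.ncard_insert_le _ _)
      exact natlem1 _ _ _ _ _ _ _ hle himg hb0 hb1 hboth.1.card_pos hboth.2.card_pos hsplit
    · -- one side empty: 0 is not a direction
      have h0D : (0 : Fin (d+1)) ∉
          {i : Fin (d+1) | ∃ x ∈ Z, ∃ y ∈ Z, x i ≠ y i ∧ ∀ j, j ≠ i → x j = y j} := by
        rintro ⟨x, hx, y, hy, hne, -⟩
        apply hboth
        rcases Bool.eq_false_or_eq_true (x 0) with hb | hb
        · -- x 0 = true
          have hy0 : y 0 = false := by
            cases hy0 : y 0 with
            | false => rfl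
            | true => exact absurd (hb.trans hy0.symm) hne
          exact ⟨⟨y, Finset.mem_filter.mpr ⟨hy, hy0⟩⟩, ⟨x, Finset.mem_filter.mpr ⟨hx, hb⟩⟩⟩
        · -- x 0 = false
          have hy0 : y 0 = true := by
            cases hy0 : y 0 with
            | true => rfl
            | false => exact absurd (hb.trans hy0.symm) hne
          exact ⟨⟨x, Finset.mem_filter.mpr ⟨hx, hb⟩⟩, ⟨y, Finset.mem_filter.mpr ⟨hy, hy0⟩⟩⟩
      have hsub : {i : Fin (d+1) | ∃ x ∈ Z, ∃ y ∈ Z, x i ≠ y i ∧ ∀ j, j ≠ i → x j = y j}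
          ⊆ Fin.succ '' ({i : Fin d | ∃ x ∈ (Z.filter (fun z => z 0 = false)).image (rmap d),
              ∃ y ∈ (Z.filter (fun z => z 0 = false)).image (rmap d),
              x i ≠ y i ∧ ∀ j, j ≠ i → x j = y j}
           ∪ {i : Fin d | ∃ x ∈ (Z.filter (fun z => z 0 = true)).image (rmap d),
              ∃ y ∈ (Z.filter (fun z => z 0 = true)).image (rmap d),
              x i ≠ y i ∧ ∀ j, j ≠ i → x j = y j}) := fun k hk => hkey k hk (fun h => h0D (h ▸ hk))
      have hle := Set.ncard_le_ncard hsub (Set.toFinite _)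
      exact natlem2 _ _ _ _ _ _ _ hle himg hb0 hb1 hsplit hZ.card_pos

/-- For a nonempty set `Z` of vertices of the `d`-cube, the number of
coordinates (directions, i.e. pairs of opposite facets) `i` such that `Z`
contains two vertices differing exactly in coordinate `i` is at most
`|Z| - 1`. -/
theorem cube_directions_associated_le (d : ℕ) (hd : 1 ≤ d)
    (Z : Finset (Fin d → Bool)) (hZ : Z.Nonempty) :
    {i : Fin d | ∃ x ∈ Z, ∃ y ∈ Z, x i ≠ y i ∧ ∀ j, j ≠ i → x j = y j}.ncard
      ≤ Z.card - 1 := by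
  exact Nat.le_sub_one_of_lt (cube_dirs_aux d Z hZ)
end

section
/- Let k ≥ 1, let G be a 2k-connected simple graph, and let G' be a subgraph of G that is k-linked. Then G is k-linked. -/
/-- A graph `G` is `m`-connected if it has at least `m + 1` vertices and
removing any set of fewer than `m` vertices leaves a connected induced
subgraph. -/
def IsNConnected {V : Type*} (G : SimpleGraph V) (m : ℕ) : Prop :=
  m + 1 ≤ Nat.card V ∧
    ∀ T : Finset V, T.card < m → (G.induce ((↑T : Set V)ᶜ)).Connected

/-- A graph `G` is `k`-linked if it has at least `2 * k` vertices and, for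
every `2 * k` distinct vertices `s 0, t 0, …, s (k-1), t (k-1)`, there are `k`
pairwise vertex-disjoint paths, the `i`-th joining `s i` to `t i`. -/
def IsKLinked {V : Type*} (G : SimpleGraph V) (k : ℕ) : Prop :=
  2 * k ≤ Nat.card V ∧
    ∀ s t : Fin k → V, Function.Injective (Sum.elim s t) →
      ∃ P : (i : Fin k) → G.Walk (s i) (t i),
        (∀ i, (P i).IsPath) ∧
        ∀ i j, i ≠ j → ∀ v, v ∈ (P i).support → v ∉ (P j).support

open SimpleGraph

namespace MengerAux

variable {V : Type*}

/-- Restriction of a graph to a vertex set, keeping the same vertex type. -/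
def restr (G : SimpleGraph V) (W : Set V) : SimpleGraph V where
  Adj u v := G.Adj u v ∧ u ∈ W ∧ v ∈ W
  symm := ⟨fun u v ⟨h, hu, hv⟩ => ⟨h.symm, hv, hu⟩⟩
  loopless := ⟨fun v h => G.loopless.irrefl v h.1⟩

lemma restr_le (G : SimpleGraph V) (W : Set V) : restr G W ≤ G := by
  intro u v h; exact h.1

/-- `S` separates `A` from `B` in `G`. -/
def isSep (G : SimpleGraph V) (A B : Set V) (S : Finset V) : Prop :=
  ∀ a ∈ A, ∀ b ∈ B, ∀ p : G.Walk a b, ∃ v ∈ p.support, v ∈ S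

/-- Vertices reachable from `A` by an `S`-avoiding walk. -/
def reachS (G : SimpleGraph V) (S : Finset V) (A : Set V) : Set V :=
  {v | ∃ a ∈ A, ∃ p : G.Walk a v, ∀ w ∈ p.support, w ∉ S}

lemma reachS_not_mem {G : SimpleGraph V} {S : Finset V} {A : Set V} {v : V}
    (h : v ∈ reachS G S A) : v ∉ S := by
  obtain ⟨a, _, p, hp⟩ := h
  exact hp v p.end_mem_support

lemma mem_reachS_of_mem {G : SimpleGraph V} {S : Finset V} {A : Set V} {a : V}
    (ha : a ∈ A) (haS : a ∉ S) : a ∈ reachS G S A :=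
  ⟨a, ha, Walk.nil, by simp [haS]⟩

lemma reachS_extend {G : SimpleGraph V} {S : Finset V} {A : Set V} {u z : V}
    (hu : u ∈ reachS G S A) (q : G.Walk u z) (hq : ∀ w ∈ q.support, w ∉ S) :
    z ∈ reachS G S A := by
  obtain ⟨a, ha, p, hp⟩ := hu
  refine ⟨a, ha, p.append q, ?_⟩
  intro w hw
  rcases (Walk.mem_support_append_iff _ _).1 hw with h | h
  · exact hp w h
  · exact hq w h

lemma support_mapLe {G G' : SimpleGraph V} (h : G ≤ G') {u v : V} (p : G.Walk u v) :
    (p.mapLe h).support = p.support := by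
  exact Walk.support_mapLe_eq_support _ _

/-- Transfer a walk into a restriction when its support lies in `W`. -/
lemma exists_restr_walk {G : SimpleGraph V} {W : Set V} :
    ∀ {u v : V} (p : G.Walk u v), (∀ w ∈ p.support, w ∈ W) →
      ∃ q : (restr G W).Walk u v, q.support = p.support := by
  intro u v p
  induction p with
  | nil => exact fun _ => ⟨Walk.nil, rfl⟩
  | cons h p ih =>
    intro hs
    obtain ⟨q, hq⟩ := ih (fun w hw => hs w (by simp [hw]))
    refine ⟨Walk.cons ⟨h, hs _ (by simp), hs _ (by simp [Walk.start_mem_support])⟩ q, ?_⟩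
    exact congrArg (List.cons _) hq

lemma restr_support_subset {G : SimpleGraph V} {W : Set V} :
    ∀ {u v : V} (p : (restr G W).Walk u v), u ∈ W → ∀ w ∈ p.support, w ∈ W := by
  intro u v p
  induction p with
  | nil => intro hu w hw; simp at hw; subst hw; exact hu
  | cons h p ih =>
    intro hu w hw
    rcases (by simpa using hw : w = _ ∨ w ∈ p.support) with rfl | hw'
    · exact hu
    · exact ih h.2.2 w hw'

lemma append_isPath {G : SimpleGraph V} {a m b : V} {p : G.Walk a m} {q : G.Walk m b}
    (hp : p.IsPath) (hq : q.IsPath) (hcap : ∀ v ∈ p.support, v ∈ q.support → v = m) :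
    (p.append q).IsPath := by
  rw [Walk.isPath_def, Walk.support_append, List.nodup_append]
  refine ⟨hp.support_nodup, ?_, ?_⟩
  · have := hq.support_nodup
    rw [q.support_eq_cons] at this
    exact this.of_cons
  · intro v hv w hv' hvw
    subst hvw
    have hvq : v ∈ q.support := by
      rw [q.support_eq_cons]; exact List.mem_cons_of_mem _ hv'
    have : v = m := hcap v hv hvq
    subst this
    have := hq.support_nodup
    rw [q.support_eq_cons] at this
    exact (List.nodup_cons.1 this).1 hv'

/-- Prefix of a walk up to the first vertex in `C`. -/
lemma exists_prefix_firstSet {G : SimpleGraph V} {C : Set V} :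
    ∀ {u v : V} (p : G.Walk u v), (∃ w ∈ p.support, w ∈ C) →
      ∃ c, c ∈ C ∧ ∃ q : G.Walk u c,
        (∀ w ∈ q.support, w ∈ p.support) ∧ (∀ w ∈ q.support, w ∈ C → w = c) := by
  intro u v p
  induction p with
  | @nil x =>
    intro h
    obtain ⟨w, hw, hwC⟩ := h
    have hwu : w = x := by simpa using hw
    subst hwu
    exact ⟨w, hwC, Walk.nil, by simp, by simp⟩
  | @cons u w v h p ih =>
    intro hex
    by_cases huC : u ∈ C
    · exact ⟨u, huC, Walk.nil, by simp, by simp⟩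
    · have hex' : ∃ w' ∈ p.support, w' ∈ C := by
        obtain ⟨w', hw', hw'C⟩ := hex
        rcases (by simpa using hw' : w' = u ∨ w' ∈ p.support) with rfl | h'
        · exact absurd hw'C huC
        · exact ⟨w', h', hw'C⟩
      obtain ⟨c, hc, q, hq1, hq2⟩ := ih hex'
      refine ⟨c, hc, Walk.cons h q, ?_, ?_⟩
      · intro x hx
        rcases (by simpa using hx : x = u ∨ x ∈ q.support) with rfl | hx'
        · simp
        · simp [hq1 x hx']
      · intro x hx hxC
        rcases (by simpa using hx : x = u ∨ x ∈ q.support) with rfl | hx'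
        · exact absurd hxC huC
        · exact hq2 x hx' hxC



/-- Trim a walk from `A` to `B` into a path meeting `A` only at its start and
`B` only at its end. -/
lemma exists_connector {G : SimpleGraph V} [DecidableEq V] {A B : Set V} {u v : V}
    (p : G.Walk u v) (hu : u ∈ A) (hv : v ∈ B) :
    ∃ a b, a ∈ A ∧ b ∈ B ∧ ∃ q : G.Walk a b, q.IsPath ∧
      (∀ w ∈ q.support, w ∈ p.support) ∧
      (∀ w ∈ q.support, w ∈ A → w = a) ∧ (∀ w ∈ q.support, w ∈ B → w = b) := by
  obtain ⟨b, hbB, q₁, hq₁sub, hq₁B⟩ :=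
    exists_prefix_firstSet (C := B) p ⟨v, p.end_mem_support, hv⟩
  obtain ⟨a, haA, q₂, hq₂sub, hq₂A⟩ :=
    exists_prefix_firstSet (C := A) q₁.reverse ⟨u, by simp, hu⟩
  refine ⟨a, b, haA, hbB, q₂.reverse.bypass, Walk.bypass_isPath _, ?_, ?_, ?_⟩
  · intro w hw
    exact hq₁sub w (by simpa using hq₂sub w (by
      simpa using Walk.support_bypass_subset _ hw))
  · intro w hw hwA
    exact hq₂A w (by simpa using Walk.support_bypass_subset _ hw) hwA
  · intro w hw hwB
    exact hq₁B w (by simpa using hq₂sub w (by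
      simpa using Walk.support_bypass_subset _ hw)) hwB

lemma reach_disjoint {G₁ : SimpleGraph V} {A B : Set V} {S : Finset V}
    (hS : isSep G₁ A B S) :
    ∀ v, v ∈ reachS G₁ S A → v ∈ reachS G₁ S B → False := by
  rintro v ⟨a, ha, p, hp⟩ ⟨b, hb, q, hq⟩
  obtain ⟨w, hw, hwS⟩ := hS a ha b hb (p.append q.reverse)
  rcases (Walk.mem_support_append_iff _ _).1 hw with h | h
  · exact hp w h hwS
  · exact hq w (by simpa using h) hwS

lemma length_takeUntil_lt {G : SimpleGraph V} [DecidableEq V] {a z z' : V}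
    (q : G.Walk a z) (h : z' ∈ q.support) (hne : z' ≠ z) :
    (q.takeUntil z' h).length < q.length := by
  have hs := q.take_spec h
  have hlen : (q.takeUntil z' h).length + (q.dropUntil z' h).length = q.length := by
    rw [← Walk.length_append, hs]
  have hd : (q.dropUntil z' h).length ≠ 0 :=
    fun h0 => hne (Walk.eq_of_length_eq_zero h0)
  omega

lemma reach_endpoint {G : SimpleGraph V} [DecidableEq V] {x y : V} {S : Finset V}
    {A : Set V} :
    ∀ (ℓ : ℕ) {a z : V}, a ∈ A → (z = x ∨ z = y) → ∀ q : G.Walk a z,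
      q.length ≤ ℓ → (∀ w ∈ q.support, w ∉ S) →
      x ∈ reachS (G.deleteEdges {s(x, y)}) S A ∨
        y ∈ reachS (G.deleteEdges {s(x, y)}) S A := by
  intro ℓ
  induction ℓ with
  | zero =>
    intro a z ha hz q hlen havoid
    have hnil : q.length = 0 := Nat.le_zero.1 hlen
    have hnoe : ∀ e' ∈ q.edges, e' ∈ (G.deleteEdges {s(x, y)}).edgeSet := by
      intro e' he'
      have : q.edges.length = 0 := by simp [Walk.length_edges, hnil]
      simp [List.length_eq_zero_iff.1 this] at he'
    rcases hz with rfl | rfl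
    · exact Or.inl ⟨a, ha, q.transfer _ hnoe,
        by rw [Walk.support_transfer]; exact havoid⟩
    · exact Or.inr ⟨a, ha, q.transfer _ hnoe,
        by rw [Walk.support_transfer]; exact havoid⟩
  | succ n ih =>
    intro a z ha hz q hlen havoid
    by_cases he : s(x, y) ∈ q.edges
    · have hxs : x ∈ q.support := q.fst_mem_support_of_mem_edges he
      have hys : y ∈ q.support := q.snd_mem_support_of_mem_edges he
      have hxy : x ≠ y := (q.adj_of_mem_edges he).ne
      rcases hz with rfl | rfl
      · -- z = x, go to y
        have hne : y ≠ z := hxy.symm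
        have hlt := length_takeUntil_lt q hys hne
        exact ih ha (Or.inr rfl) (q.takeUntil y hys) (by omega)
          (fun w hw => havoid w (q.support_takeUntil_subset hys hw))
      · have hne : x ≠ z := hxy
        have hlt := length_takeUntil_lt q hxs hne
        exact ih ha (Or.inl rfl) (q.takeUntil x hxs) (by omega)
          (fun w hw => havoid w (q.support_takeUntil_subset hxs hw))
    · have hnoe : ∀ e' ∈ q.edges, e' ∈ (G.deleteEdges {s(x, y)}).edgeSet := by
        intro e' he'
        rw [SimpleGraph.edgeSet_deleteEdges]
        refine ⟨q.edges_subset_edgeSet he', ?_⟩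
        simp only [Set.mem_singleton_iff]
        exact fun hEq => he (hEq ▸ he')
      rcases hz with rfl | rfl
      · exact Or.inl ⟨a, ha, q.transfer _ hnoe,
          by rw [Walk.support_transfer]; exact havoid⟩
      · exact Or.inr ⟨a, ha, q.transfer _ hnoe,
          by rw [Walk.support_transfer]; exact havoid⟩

lemma supportVA {G H : SimpleGraph V} {x y : V} {S : Finset V} {A : Set V}
    (hH : ∀ ⦃u w : V⦄, G.Adj u w → s(u, w) ≠ s(x, y) → H.Adj u w) :
    ∀ {u z : V} (q : G.Walk u z), q.IsPath → u ∈ reachS H S A →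
      (∀ w ∈ q.support, w ≠ z → (w ∉ S ∧ w ≠ x)) →
      ∀ w ∈ q.support, w ≠ z → w ∈ reachS H S A := by
  intro u z q
  induction q with
  | @nil u0 =>
    intro _ _ _ w hw hwz
    have : w = u0 := by simpa using hw
    exact absurd this hwz
  | @cons u w₁ z h q' ih =>
    intro hpath hu hav w hw hwz
    have hq'path : q'.IsPath := ((Walk.cons_isPath_iff h q').1 hpath).1
    have hunot : u ∉ q'.support := ((Walk.cons_isPath_iff h q').1 hpath).2
    rcases (by simpa using hw : w = u ∨ w ∈ q'.support) with rfl | hw'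
    · exact hu
    · by_cases hw₁z : w₁ = z
      · subst hw₁z
        have : q' = Walk.nil := Walk.isPath_iff_eq_nil.1 hq'path
        subst this
        have : w = w₁ := by simpa using hw'
        exact absurd this hwz
      · have huz : u ≠ z := fun h' => hunot (h' ▸ q'.end_mem_support)
        have hw₁ : w₁ ∉ S ∧ w₁ ≠ x := hav w₁ (by simp) hw₁z
        have hune : u ∉ S ∧ u ≠ x := hav u (by simp) huz
        have hne : s(u, w₁) ≠ s(x, y) := by
          intro hEq
          rcases Sym2.eq_iff.1 hEq with ⟨rfl, rfl⟩ | ⟨rfl, rfl⟩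
          · exact hune.2 rfl
          · exact hw₁.2 rfl
        have hH' : H.Adj u w₁ := hH h hne
        have hw₁VA : w₁ ∈ reachS H S A := by
          refine reachS_extend hu (Walk.cons hH' Walk.nil) ?_
          intro v hv
          rcases (by simpa using hv : v = u ∨ v = w₁) with rfl | rfl
          · exact reachS_not_mem hu
          · exact hw₁.1
        exact ih hq'path hw₁VA
          (fun v hv hvz => hav v (by simp [hv]) hvz) w hw' hwz

lemma isSep_comm {G : SimpleGraph V} {A B : Set V} {S : Finset V} :
    isSep G A B S ↔ isSep G B A S := by
  constructor <;>
  · intro h b hb a ha p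
    obtain ⟨v, hv, hvS⟩ := h a ha b hb p.reverse
    exact ⟨v, by simpa using hv, hvS⟩

/-- The key lemma: every separator of `A` from `insert x S` in the restriction
of `G` to `V_A ∪ S` is a separator of `A` from `B` in `G`. -/
lemma sep_restr {G : SimpleGraph V} [DecidableEq V] {x y : V} {S : Finset V}
    {A B : Set V} {n : ℕ}
    (hSx_sep : isSep G A B (insert x S))
    (hx : x ∈ reachS (G.deleteEdges {s(x, y)}) S A)
    (hsep : ∀ T : Finset V, isSep G A B T → n ≤ T.card) :
    ∀ T : Finset V,
      isSep (restr G (reachS (G.deleteEdges {s(x, y)}) S A ∪ ↑S)) A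
        (↑(insert x S) : Set V) T → n ≤ T.card := by
  intro T hT
  set VA := reachS (G.deleteEdges {s(x, y)}) S A with hVAdef
  apply hsep
  intro a ha b hb p
  by_contra hcon
  push_neg at hcon
  obtain ⟨w0, hw0p, hw0⟩ := hSx_sep a ha b hb p
  obtain ⟨c, hcSx, q₀, hq₀sub, hq₀last⟩ :=
    exists_prefix_firstSet (C := (↑(insert x S) : Set V)) p
      ⟨w0, hw0p, by exact_mod_cast hw0⟩
  have hqpath : q₀.bypass.IsPath := q₀.bypass_isPath
  set q := q₀.bypass with hqdef
  have hqsub : ∀ w ∈ q.support, w ∈ p.support :=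
    fun w hw => hq₀sub w (q₀.support_bypass_subset hw)
  have hqlast : ∀ w ∈ q.support, w ∈ (↑(insert x S) : Set V) → w = c :=
    fun w hw => hq₀last w (q₀.support_bypass_subset hw)
  by_cases haSx : a ∈ (↑(insert x S) : Set V)
  · obtain ⟨v, hv, hvT⟩ := hT a ha a haSx Walk.nil
    have : v = a := by simpa using hv
    subst this
    exact hcon v p.start_mem_support hvT
  · have haVA : a ∈ VA := by
      refine mem_reachS_of_mem ha (fun haS => haSx ?_)
      simp [haS]
    have hside : ∀ w ∈ q.support, w ≠ c → (w ∉ S ∧ w ≠ x) := by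
      intro w hw hwc
      constructor
      · intro hwS
        exact hwc (hqlast w hw (by simp [hwS]))
      · intro hwx
        exact hwc (hqlast w hw (by simp [hwx]))
    have hH : ∀ ⦃u w : V⦄, G.Adj u w → s(u, w) ≠ s(x, y) →
        (G.deleteEdges {s(x, y)}).Adj u w := by
      intro u w huw hne
      rw [SimpleGraph.deleteEdges_adj]
      exact ⟨huw, by simpa using hne⟩
    have hsupp := supportVA (S := S) (A := A) hH q hqpath haVA hside
    have hsub2 : ∀ w ∈ q.support, w ∈ VA ∪ ↑S := by
      intro w hw
      by_cases hwc : w = c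
      · subst hwc
        rcases Finset.mem_insert.1 (by exact_mod_cast hcSx) with rfl | hwS
        · exact Or.inl hx
        · exact Or.inr hwS
      · exact Or.inl (hsupp w hw hwc)
    obtain ⟨q', hq'supp⟩ := exists_restr_walk (W := VA ∪ ↑S) q hsub2
    obtain ⟨v, hvq', hvT⟩ := hT a ha c hcSx q'
    rw [hq'supp] at hvq'
    exact hcon v (hqsub v hvq') hvT

lemma menger_step [Fintype V] [DecidableEq V] {ι : Type*} [Fintype ι] [DecidableEq ι]
    (G : SimpleGraph V) (A B : Set V) (x y : V) (hadj : G.Adj x y) (S : Finset V)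
    (hS : isSep (G.deleteEdges {s(x, y)}) A B S)
    (hxS : x ∉ S) (hyS : y ∉ S)
    (hn : Fintype.card ι = S.card + 1)
    (hSx_sep : isSep G A B (insert x S)) (hSy_sep : isSep G A B (insert y S))
    (hsep : ∀ T : Finset V, isSep G A B T → Fintype.card ι ≤ T.card)
    (hx : x ∈ reachS (G.deleteEdges {s(x, y)}) S A)
    (hy : y ∈ reachS (G.deleteEdges {s(x, y)}) S B)
    (ih : ∀ G' : SimpleGraph V, G'.edgeSet.ncard < G.edgeSet.ncard →
      ∀ A' B' : Set V, (∀ T : Finset V, isSep G' A' B' T → Fintype.card ι ≤ T.card) →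
      ∃ (a : ι → V) (b : ι → V) (P : ∀ i, G'.Walk (a i) (b i)),
        (∀ i, a i ∈ A') ∧ (∀ i, b i ∈ B') ∧
        (∀ i j, i ≠ j → ∀ v, v ∈ (P i).support → v ∉ (P j).support)) :
    ∃ (a : ι → V) (b : ι → V) (P : ∀ i, G.Walk (a i) (b i)),
      (∀ i, a i ∈ A) ∧ (∀ i, b i ∈ B) ∧
      (∀ i j, i ≠ j → ∀ v, v ∈ (P i).support → v ∉ (P j).support) := by
  classical
  set G₁ := G.deleteEdges {s(x, y)} with hG₁def
  set VA := reachS G₁ S A with hVAdef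
  set VB := reachS G₁ S B with hVBdef
  have hdisj : ∀ v, v ∈ VA → v ∈ VB → False := reach_disjoint hS
  -- separator bounds for the two restricted graphs
  have hsepA : ∀ T : Finset V, isSep (restr G (VA ∪ ↑S)) A (↑(insert x S) : Set V) T →
      Fintype.card ι ≤ T.card :=
    sep_restr (y := y) hSx_sep hx hsep
  have hsepB : ∀ T : Finset V, isSep (restr G (VB ∪ ↑S)) (↑(insert y S) : Set V) B T →
      Fintype.card ι ≤ T.card := by
    intro T hT
    have hswap : (s(y, x) : Sym2 V) = s(x, y) := Sym2.eq_swap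
    refine sep_restr (G := G) (A := B) (B := A) (x := y) (y := x)
      (isSep_comm.1 hSy_sep) ?_ (fun T' hT' => hsep T' (isSep_comm.2 hT')) T ?_
    · rw [hswap]; exact hy
    · rw [hswap]; exact isSep_comm.1 hT
  -- edge counts
  have hyVAS : y ∉ VA ∪ ↑S := by
    rintro (h | h)
    · exact hdisj y h hy
    · exact hyS h
  have hxVBS : x ∉ VB ∪ ↑S := by
    rintro (h | h)
    · exact hdisj x hx h
    · exact hxS h
  have hGA_lt : (restr G (VA ∪ ↑S)).edgeSet.ncard < G.edgeSet.ncard := by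
    refine Set.ncard_lt_ncard ⟨SimpleGraph.edgeSet_mono (restr_le G _), fun hsub => ?_⟩
      G.edgeSet.toFinite
    have := hsub (G.mem_edgeSet.2 hadj)
    exact hyVAS ((SimpleGraph.mem_edgeSet _).1 this).2.2
  have hGB_lt : (restr G (VB ∪ ↑S)).edgeSet.ncard < G.edgeSet.ncard := by
    refine Set.ncard_lt_ncard ⟨SimpleGraph.edgeSet_mono (restr_le G _), fun hsub => ?_⟩
      G.edgeSet.toFinite
    have := hsub (G.mem_edgeSet.2 hadj)
    exact hxVBS ((SimpleGraph.mem_edgeSet _).1 this).2.1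
  -- apply induction hypothesis
  obtain ⟨aP, cP, P₀, haP, hcP, hPdisj⟩ :=
    ih (restr G (VA ∪ ↑S)) hGA_lt A (↑(insert x S) : Set V) hsepA
  obtain ⟨dQ, bQ, Q₀, hdQ, hbQ, hQdisj⟩ :=
    ih (restr G (VB ∪ ↑S)) hGB_lt (↑(insert y S) : Set V) B hsepB
  -- trim to connectors
  choose a c haA hcSx P hPpath hPsub hPfirst hPlast using
    fun i => exists_connector (P₀ i) (haP i) (hcP i)
  choose d b hdSy hbB Q hQpath hQsub hQfirst hQlast using
    fun i => exists_connector (Q₀ i) (hdQ i) (hbQ i)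
  have hPd : ∀ i j, i ≠ j → ∀ v, v ∈ (P i).support → v ∉ (P j).support :=
    fun i j hij v hv hv' => hPdisj i j hij v (hPsub i v hv) (hPsub j v hv')
  have hQd : ∀ i j, i ≠ j → ∀ v, v ∈ (Q i).support → v ∉ (Q j).support :=
    fun i j hij v hv hv' => hQdisj i j hij v (hQsub i v hv) (hQsub j v hv')
  -- supports of the two systems
  have hAsub : A ⊆ VA ∪ ↑S := by
    intro v hv
    by_cases hvS : v ∈ S
    · exact Or.inr hvS
    · exact Or.inl (mem_reachS_of_mem hv hvS)
  have hSySub : (↑(insert y S) : Set V) ⊆ VB ∪ ↑S := by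
    intro v hv
    rcases Finset.mem_insert.1 (by exact_mod_cast hv) with rfl | hvS
    · exact Or.inl hy
    · exact Or.inr hvS
  have hPsupp : ∀ i, ∀ w ∈ (P i).support, w ∈ VA ∪ ↑S :=
    fun i => restr_support_subset (P i) (hAsub (haA i))
  have hQsupp : ∀ i, ∀ w ∈ (Q i).support, w ∈ VB ∪ ↑S :=
    fun i => restr_support_subset (Q i) (hSySub (hdSy i))
  -- injectivity of endpoint maps
  have hcInj : Function.Injective c := by
    intro i j hij
    by_contra hne
    have h1 : c j ∈ (P i).support := hij ▸ (P i).end_mem_support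
    exact hPd i j hne (c j) h1 ((P j).end_mem_support)
  have hdInj : Function.Injective d := by
    intro i j hij
    by_contra hne
    have h1 : d j ∈ (Q i).support := hij ▸ (Q i).start_mem_support
    exact hQd i j hne (d j) h1 ((Q j).start_mem_support)
  -- the image of d is all of insert y S
  have himgd : Finset.univ.image d = insert y S := by
    apply Finset.eq_of_subset_of_card_le
    · intro v hv
      obtain ⟨i, _, rfl⟩ := Finset.mem_image.1 hv
      exact_mod_cast hdSy i
    · rw [Finset.card_image_of_injective _ hdInj, Finset.card_univ,
        Finset.card_insert_of_notMem hyS]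
      omega
  -- the matching
  set tgt : ι → V := fun i => if c i = x then y else c i with htgtdef
  have htgtmem : ∀ i, tgt i ∈ insert y S := by
    intro i
    by_cases hci : c i = x
    · simp [htgtdef, hci]
    · have : c i ∈ insert x S := by exact_mod_cast hcSx i
      rcases Finset.mem_insert.1 this with h | h
      · exact absurd h hci
      · simp [htgtdef, hci, Finset.mem_insert_of_mem h]
  have hex : ∀ i, ∃ j, d j = tgt i := by
    intro i
    have : tgt i ∈ Finset.univ.image d := himgd ▸ htgtmem i
    obtain ⟨j, _, hj⟩ := Finset.mem_image.1 this
    exact ⟨j, hj⟩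
  choose m hm using hex
  have htgtInj : Function.Injective tgt := by
    intro i j hij
    apply hcInj
    by_cases hci : c i = x <;> by_cases hcj : c j = x
    · rw [hci, hcj]
    · exfalso
      have : c j ∈ insert x S := by exact_mod_cast hcSx j
      have hcjS : c j ∈ S := (Finset.mem_insert.1 this).resolve_left hcj
      have : y = c j := by simpa [htgtdef, hci, hcj] using hij
      exact hyS (this ▸ hcjS)
    · exfalso
      have : c i ∈ insert x S := by exact_mod_cast hcSx i
      have hciS : c i ∈ S := (Finset.mem_insert.1 this).resolve_left hci
      have : c i = y := by simpa [htgtdef, hci, hcj] using hij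
      exact hyS (this ▸ hciS)
    · simpa [htgtdef, hci, hcj] using hij
  have hmInj : Function.Injective m := by
    intro i j hij
    apply htgtInj
    rw [← hm i, ← hm j, hij]
  -- glue the path systems
  have hglue : ∀ i : ι, ∃ W : G.Walk (a i) (b (m i)),
      ∀ v ∈ W.support, v ∈ (P i).support ∨ v ∈ (Q (m i)).support := by
    intro i
    by_cases hci : c i = x
    · have hd : d (m i) = y := by rw [hm i]; simp [htgtdef, hci]
      refine ⟨(((P i).mapLe (restr_le G _)).copy rfl hci).append
        (Walk.cons hadj (((Q (m i)).mapLe (restr_le G _)).copy hd rfl)), ?_⟩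
      intro v hv
      rcases (Walk.mem_support_append_iff _ _).1 hv with h | h
      · left
        rw [Walk.support_copy, support_mapLe] at h
        exact h
      · rw [Walk.support_cons] at h
        rcases List.mem_cons.1 h with rfl | h'
        · left
          exact hci ▸ (P i).end_mem_support
        · right
          rw [Walk.support_copy, support_mapLe] at h'
          exact h'
    · have hd : d (m i) = c i := by rw [hm i]; simp [htgtdef, hci]
      refine ⟨((P i).mapLe (restr_le G _)).append
        (((Q (m i)).mapLe (restr_le G _)).copy hd rfl), ?_⟩
      intro v hv
      rcases (Walk.mem_support_append_iff _ _).1 hv with h | h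
      · left
        rw [support_mapLe] at h
        exact h
      · right
        rw [Walk.support_copy, support_mapLe] at h
        exact h
  choose W hWsub using hglue
  refine ⟨a, fun i => b (m i), W, fun i => haA i, fun i => hbB (m i), ?_⟩
  -- the mixed disjointness argument
  have hmix : ∀ i j, i ≠ j → ∀ v, v ∈ (P i).support → v ∈ (Q (m j)).support → False := by
    intro i j hij v hPi hQj
    have hvS : v ∈ (↑S : Set V) := by
      rcases hPsupp i v hPi with h | h
      · rcases hQsupp (m j) v hQj with h' | h'
        · exact absurd h' (fun h'' => hdisj v h h'')
        · exact h'
      · exact h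
    have hvc : v = c i := hPlast i v hPi (by
      have : v ∈ insert x S := Finset.mem_insert_of_mem hvS
      exact_mod_cast this)
    have hvd : v = d (m j) := hQfirst (m j) v hQj (by
      have : v ∈ insert y S := Finset.mem_insert_of_mem hvS
      exact_mod_cast this)
    have hcix : c i ≠ x := fun h => hxS (h ▸ (hvc ▸ hvS))
    have hdi : d (m i) = c i := by rw [hm i]; simp [htgtdef, hcix]
    have : m i = m j := hdInj (by rw [hdi, ← hvc, hvd])
    exact hij (hmInj this)
  intro i j hij v hvi hvj
  rcases hWsub i v hvi with hPi | hQi <;> rcases hWsub j v hvj with hPj | hQj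
  · exact hPd i j hij v hPi hPj
  · exact hmix i j hij v hPi hQj
  · exact hmix j i (Ne.symm hij) v hPj hQi
  · exact hQd (m i) (m j) (fun h => hij (hmInj h)) v hQi hQj

lemma menger_edgeless [Fintype V] {ι : Type*} [Fintype ι]
    (G : SimpleGraph V) (hE : ∀ u v : V, ¬G.Adj u v) (A B : Set V)
    (hsep : ∀ S : Finset V, isSep G A B S → Fintype.card ι ≤ S.card) :
    ∃ (a : ι → V) (b : ι → V) (P : ∀ i, G.Walk (a i) (b i)),
      (∀ i, a i ∈ A) ∧ (∀ i, b i ∈ B) ∧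
      (∀ i j, i ≠ j → ∀ v, v ∈ (P i).support → v ∉ (P j).support) := by
  classical
  have hwalk : ∀ {u v : V}, G.Walk u v → u = v := by
    intro u v p
    cases p with
    | nil => rfl
    | cons h _ => exact absurd h (hE _ _)
  set S₀ := (A ∩ B).toFinite.toFinset with hS₀
  have hsep₀ : isSep G A B S₀ := by
    intro a ha b hb p
    have hab : a = b := hwalk p
    refine ⟨a, p.start_mem_support, ?_⟩
    rw [hS₀, Set.Finite.mem_toFinset]
    exact ⟨ha, hab ▸ hb⟩
  obtain ⟨t, hts, htcard⟩ := Finset.exists_subset_card_eq (hsep S₀ hsep₀)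
  have e : ι ≃ ↥t := Fintype.equivOfCardEq (by simp [htcard])
  have hmem : ∀ i : ι, ((e i : V) ∈ A ∧ (e i : V) ∈ B) := by
    intro i
    have : (e i : V) ∈ S₀ := hts (e i).2
    rw [hS₀, Set.Finite.mem_toFinset] at this
    exact this
  refine ⟨fun i => (e i : V), fun i => (e i : V), fun _ => Walk.nil,
    fun i => (hmem i).1, fun i => (hmem i).2, ?_⟩
  intro i j hij v hvi hvj
  have h1 : v = (e i : V) := by simpa using hvi
  have h2 : v = (e j : V) := by simpa using hvj
  exact hij (e.injective (Subtype.ext (h1 ▸ h2)))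

theorem menger [Fintype V] [DecidableEq V] {ι : Type*} [Fintype ι] [DecidableEq ι] :
    ∀ (N : ℕ) (G : SimpleGraph V), G.edgeSet.ncard ≤ N →
      ∀ A B : Set V, (∀ S : Finset V, isSep G A B S → Fintype.card ι ≤ S.card) →
      ∃ (a : ι → V) (b : ι → V) (P : ∀ i, G.Walk (a i) (b i)),
        (∀ i, a i ∈ A) ∧ (∀ i, b i ∈ B) ∧
        (∀ i j, i ≠ j → ∀ v, v ∈ (P i).support → v ∉ (P j).support) := by
  intro N
  induction N with
  | zero =>
    intro G hN A B hsep
    refine menger_edgeless G ?_ A B hsep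
    intro u v huv
    have : G.edgeSet = ∅ := by
      rw [← Set.ncard_eq_zero G.edgeSet.toFinite]
      omega
    exact absurd ((G.mem_edgeSet).2 huv) (this ▸ Set.notMem_empty _)
  | succ N ihN =>
    intro G hN A B hsep
    by_cases hEdge : ∀ u v : V, ¬G.Adj u v
    · exact menger_edgeless G hEdge A B hsep
    · push_neg at hEdge
      obtain ⟨x, y, hadj⟩ := hEdge
      have hG₁lt : (G.deleteEdges {s(x, y)}).edgeSet.ncard < G.edgeSet.ncard := by
        refine Set.ncard_lt_ncard ?_ G.edgeSet.toFinite
        rw [SimpleGraph.edgeSet_deleteEdges]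
        refine ⟨Set.diff_subset, fun hsub => ?_⟩
        exact (hsub ((G.mem_edgeSet).2 hadj)).2 rfl
      by_cases hB1 : ∀ S : Finset V, isSep (G.deleteEdges {s(x, y)}) A B S →
          Fintype.card ι ≤ S.card
      · obtain ⟨a, b, P, h1, h2, h3⟩ := ihN (G.deleteEdges {s(x, y)}) (by omega) A B hB1
        refine ⟨a, b, fun i => (P i).mapLe (G.deleteEdges_le _), h1, h2, ?_⟩
        intro i j hij v hv
        rw [support_mapLe] at hv ⊢
        exact h3 i j hij v hv
      · push_neg at hB1
        obtain ⟨S, hS, hScard⟩ := hB1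
        have hkey : ∀ z : V, z = x ∨ z = y → isSep G A B (insert z S) := by
          intro z hz a ha b hb p
          by_cases hep : s(x, y) ∈ p.edges
          · rcases hz with rfl | rfl
            · exact ⟨z, p.fst_mem_support_of_mem_edges hep, Finset.mem_insert_self _ _⟩
            · exact ⟨z, p.snd_mem_support_of_mem_edges hep, Finset.mem_insert_self _ _⟩
          · have hnoe : ∀ e' ∈ p.edges, e' ∈ (G.deleteEdges {s(x, y)}).edgeSet := by
              intro e' he'
              rw [SimpleGraph.edgeSet_deleteEdges]
              refine ⟨p.edges_subset_edgeSet he', ?_⟩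
              simp only [Set.mem_singleton_iff]
              exact fun hEq => hep (hEq ▸ he')
            obtain ⟨v, hv, hvS⟩ := hS a ha b hb (p.transfer _ hnoe)
            rw [Walk.support_transfer] at hv
            exact ⟨v, hv, Finset.mem_insert_of_mem hvS⟩
        have hxS : x ∉ S := by
          intro hxS
          have h' := hkey x (Or.inl rfl)
          rw [Finset.insert_eq_self.2 hxS] at h'
          exact absurd (hsep S h') (not_le.2 hScard)
        have hyS : y ∉ S := by
          intro hyS
          have h' := hkey y (Or.inr rfl)
          rw [Finset.insert_eq_self.2 hyS] at h'
          exact absurd (hsep S h') (not_le.2 hScard)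
        have hn : Fintype.card ι = S.card + 1 := by
          have h1 := hsep _ (hkey x (Or.inl rfl))
          rw [Finset.card_insert_of_notMem hxS] at h1
          omega
        have hnotSep : ¬isSep G A B S := fun h => absurd (hsep S h) (not_le.2 hScard)
        have hexP : ∃ a ∈ A, ∃ b ∈ B, ∃ p : G.Walk a b, ∀ v ∈ p.support, v ∉ S := by
          by_contra hcon
          push_neg at hcon
          apply hnotSep
          intro a ha b hb p
          obtain ⟨v, hv, hvS⟩ := hcon a ha b hb p
          exact ⟨v, hv, hvS⟩
        obtain ⟨a₀, ha₀, b₀, hb₀, p₀, hp₀⟩ := hexP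
        have hep₀ : s(x, y) ∈ p₀.edges := by
          by_contra hep
          have hnoe : ∀ e' ∈ p₀.edges, e' ∈ (G.deleteEdges {s(x, y)}).edgeSet := by
            intro e' he'
            rw [SimpleGraph.edgeSet_deleteEdges]
            refine ⟨p₀.edges_subset_edgeSet he', ?_⟩
            simp only [Set.mem_singleton_iff]
            exact fun hEq => hep (hEq ▸ he')
          obtain ⟨v, hv, hvS⟩ := hS a₀ ha₀ b₀ hb₀ (p₀.transfer _ hnoe)
          rw [Walk.support_transfer] at hv
          exact hp₀ v hv hvS
        have hxp : x ∈ p₀.support := p₀.fst_mem_support_of_mem_edges hep₀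
        have hA' : x ∈ reachS (G.deleteEdges {s(x, y)}) S A ∨
            y ∈ reachS (G.deleteEdges {s(x, y)}) S A :=
          reach_endpoint (p₀.takeUntil x hxp).length ha₀ (Or.inl rfl)
            (p₀.takeUntil x hxp) le_rfl
            (fun w hw => hp₀ w (p₀.support_takeUntil_subset hxp hw))
        have hxp' : x ∈ p₀.reverse.support := by simpa using hxp
        have hB' : x ∈ reachS (G.deleteEdges {s(x, y)}) S B ∨
            y ∈ reachS (G.deleteEdges {s(x, y)}) S B :=
          reach_endpoint (p₀.reverse.takeUntil x hxp').length hb₀ (Or.inl rfl)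
            (p₀.reverse.takeUntil x hxp') le_rfl
            (fun w hw => hp₀ w (by
              simpa using p₀.reverse.support_takeUntil_subset hxp' hw))
        have hdisj := reach_disjoint hS
        have hih : ∀ G' : SimpleGraph V, G'.edgeSet.ncard < G.edgeSet.ncard →
            ∀ A' B' : Set V,
            (∀ T : Finset V, isSep G' A' B' T → Fintype.card ι ≤ T.card) →
            ∃ (a : ι → V) (b : ι → V) (P : ∀ i, G'.Walk (a i) (b i)),
              (∀ i, a i ∈ A') ∧ (∀ i, b i ∈ B') ∧
              (∀ i j, i ≠ j → ∀ v, v ∈ (P i).support → v ∉ (P j).support) := by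
          intro G' hlt A' B' hsep'
          exact ihN G' (by omega) A' B' hsep'
        rcases hA' with hxA | hyA
        · rcases hB' with hxB | hyB
          · exact absurd hxB (fun h => hdisj x hxA h)
          · exact menger_step G A B x y hadj S hS hxS hyS hn
              (hkey x (Or.inl rfl)) (hkey y (Or.inr rfl)) hsep hxA hyB hih
        · rcases hB' with hxB | hyB
          · -- swap roles of x and y
            have hswap : (s(y, x) : Sym2 V) = s(x, y) := Sym2.eq_swap
            have hS' : isSep (G.deleteEdges {s(y, x)}) A B S := by rw [hswap]; exact hS
            have hyA' : y ∈ reachS (G.deleteEdges {s(y, x)}) S A := by rw [hswap]; exact hyA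
            have hxB' : x ∈ reachS (G.deleteEdges {s(y, x)}) S B := by rw [hswap]; exact hxB
            exact menger_step G A B y x hadj.symm S hS' hyS hxS hn
              (hkey y (Or.inr rfl)) (hkey x (Or.inl rfl)) hsep hyA' hxB' hih
          · exact absurd hyB (fun h => hdisj y hyA h)

end MengerAux

open MengerAux in
/-- If `G` is a `2k`-connected graph containing a `k`-linked subgraph `G'`
(a graph on a subset `s` of the vertices of `G` all of whose edges are edges
of `G`), then `G` is `k`-linked. -/
theorem isKLinked_of_subgraph_isKLinked {V : Type*} [Fintype V]
    (G : SimpleGraph V) (k : ℕ) (hk : 1 ≤ k)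
    (hconn : IsNConnected G (2 * k))
    (s : Set V) (G' : SimpleGraph s)
    (hsub : ∀ x y : s, G'.Adj x y → G.Adj x y)
    (hG' : IsKLinked G' k) :
    IsKLinked G k := by
  classical
  refine ⟨by have := hconn.1; omega, ?_⟩
  intro st tt hinj
  set ι := (Fin k ⊕ Fin k) with hι
  set f : ι → V := Sum.elim st tt with hf
  set A : Set V := Set.range f with hA
  have hcardι : Fintype.card ι = 2 * k := by
    simp [hι, Fintype.card_sum]
    omega
  -- the separation bound, from 2k-connectivity
  have hsep : ∀ S : Finset V, isSep G A s S → Fintype.card ι ≤ S.card := by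
    intro S hSsep
    rw [hcardι]
    by_contra hlt
    push_neg at hlt
    -- a terminal outside S
    have hexA : ∃ i : ι, f i ∉ S := by
      by_contra hall
      push_neg at hall
      have himg : Finset.univ.image f ⊆ S := by
        intro v hv
        obtain ⟨i, _, rfl⟩ := Finset.mem_image.1 hv
        exact hall i
      have := Finset.card_le_card himg
      rw [Finset.card_image_of_injective _ hinj, Finset.card_univ, hcardι] at this
      omega
    obtain ⟨i0, hi0⟩ := hexA
    -- a vertex of s outside S
    have hexB : ∃ v : V, v ∈ s ∧ v ∉ S := by
      by_contra hall
      push_neg at hall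
      have hsub' : s ⊆ (↑S : Set V) := fun v hv => hall v hv
      have h1 : s.ncard ≤ S.card := by
        have := Set.ncard_le_ncard hsub' S.finite_toSet
        rwa [Set.ncard_coe_finset] at this
      have h2 : 2 * k ≤ s.ncard := by
        have := hG'.1
        rwa [Nat.card_coe_set_eq] at this
      omega
    obtain ⟨v0, hv0s, hv0S⟩ := hexB
    have hi0' : f i0 ∈ ((↑S : Set V)ᶜ) := hi0
    have hv0' : v0 ∈ ((↑S : Set V)ᶜ) := hv0S
    have hreach := (hconn.2 S hlt).preconnected ⟨f i0, hi0'⟩ ⟨v0, hv0'⟩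
    obtain ⟨pw⟩ := hreach
    obtain ⟨w, hw, hwS⟩ := hSsep (f i0) ⟨i0, rfl⟩ v0 hv0s
      (pw.map (⟨Subtype.val, fun {a b} h => h⟩ : (G.induce ((↑S : Set V)ᶜ)) →g G))
    rw [Walk.support_map] at hw
    obtain ⟨u, _, rfl⟩ := List.mem_map.1 hw
    exact u.2 hwS
  -- Menger + trimming
  obtain ⟨a, b, P₀, haA, hbB, hdisj0⟩ :=
    menger (ι := ι) G.edgeSet.ncard G le_rfl A s hsep
  choose a' b' ha'A hb'B P hPpath hPsub hPfirst hPlast using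
    fun i => exists_connector (P₀ i) (haA i) (hbB i)
  have hPd : ∀ i j, i ≠ j → ∀ v, v ∈ (P i).support → v ∉ (P j).support :=
    fun i j hij v hv hv' => hdisj0 i j hij v (hPsub i v hv) (hPsub j v hv')
  -- reindex so that the i-th path starts at f i
  have hexg : ∀ i, ∃ j, f j = a' i := fun i => ha'A i
  choose g hg using hexg
  have ha'Inj : Function.Injective a' := by
    intro i j hij
    by_contra hne
    have h1 : a' j ∈ (P i).support := hij ▸ (P i).start_mem_support
    exact hPd i j hne (a' j) h1 ((P j).start_mem_support)
  have hgInj : Function.Injective g := by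
    intro i j hij
    apply ha'Inj
    rw [← hg i, ← hg j, hij]
  set σ : ι ≃ ι := Equiv.ofBijective g (Finite.injective_iff_bijective.1 hgInj)
    with hσdef
  have hσcoe : ∀ x, σ x = g x := fun x => rfl
  have hσ : ∀ i, g (σ.symm i) = i := fun i => by
    rw [← hσcoe]; exact σ.apply_symm_apply i
  have hcopyEq : ∀ i, a' (σ.symm i) = f i := by
    intro i
    rw [← hg (σ.symm i), hσ i]
  set bb : ι → V := fun i => b' (σ.symm i) with hbb
  set R : ∀ i : ι, G.Walk (f i) (bb i) :=
    fun i => (P (σ.symm i)).copy (hcopyEq i) rfl with hR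
  have hRpath : ∀ i, (R i).IsPath := by
    intro i
    rw [hR]
    simpa [Walk.isPath_copy] using hPpath (σ.symm i)
  have hRd : ∀ i j, i ≠ j → ∀ v, v ∈ (R i).support → v ∉ (R j).support := by
    intro i j hij v hv hv'
    rw [hR, Walk.support_copy] at hv hv'
    exact hPd (σ.symm i) (σ.symm j) (fun h => hij (σ.symm.injective h)) v hv hv'
  have hRlast : ∀ i, ∀ v ∈ (R i).support, v ∈ s → v = bb i := by
    intro i v hv hvs
    rw [hR, Walk.support_copy] at hv
    exact hPlast (σ.symm i) v hv hvs
  have hbbs : ∀ i, bb i ∈ s := fun i => hb'B (σ.symm i)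
  -- the k-linked hypothesis inside G'
  set eb : ι → ↥s := fun i => ⟨bb i, hbbs i⟩ with heb
  have hbbInj : Function.Injective bb := by
    intro i j hij
    by_contra hne
    have h1 : bb j ∈ (R i).support := hij ▸ (R i).end_mem_support
    exact hRd i j hne (bb j) h1 ((R j).end_mem_support)
  have hebInj : Function.Injective eb := by
    intro i j hij
    exact hbbInj (congrArg Subtype.val hij)
  have hinj2 : Function.Injective (Sum.elim (fun i => eb (Sum.inl i))
      (fun i => eb (Sum.inr i))) := by
    have hEq : ∀ u : ι, Sum.elim (fun i => eb (Sum.inl i))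
        (fun i => eb (Sum.inr i)) u = eb u := by rintro (u | u) <;> rfl
    intro u v huv
    rw [hEq, hEq] at huv
    exact hebInj huv
  obtain ⟨Q, hQpath, hQdisj⟩ := hG'.2 _ _ hinj2
  set RQ : ∀ i : Fin k, G.Walk (bb (Sum.inl i)) (bb (Sum.inr i)) :=
    fun i => (Q i).map (⟨Subtype.val, fun {u v} h => hsub u v h⟩ : G' →g G)
    with hRQ
  have hRQpath : ∀ i, (RQ i).IsPath :=
    fun i => Walk.map_isPath_of_injective Subtype.val_injective (hQpath i)
  have hRQmem : ∀ i v, v ∈ (RQ i).support → ∃ u : ↥s, u ∈ (Q i).support ∧ ↑u = v := by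
    intro i v hv
    rw [hRQ, Walk.support_map] at hv
    obtain ⟨u, hu, rfl⟩ := List.mem_map.1 hv
    exact ⟨u, hu, rfl⟩
  have hRQs : ∀ i v, v ∈ (RQ i).support → v ∈ s := by
    intro i v hv
    obtain ⟨u, _, rfl⟩ := hRQmem i v hv
    exact u.2
  -- eb-endpoints belong only to their own Q-path
  have hQmem : ∀ i (c : Fin k → ι), (c = Sum.inl ∨ c = Sum.inr) →
      eb (c i) ∈ (Q i).support := by
    rintro i c (rfl | rfl)
    · exact (Q i).start_mem_support
    · exact (Q i).end_mem_support
  have hcross : ∀ (i j : Fin k), i ≠ j → ∀ (c : Fin k → ι),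
      (c = Sum.inl ∨ c = Sum.inr) → ∀ v, v ∈ (R (c i)).support →
      v ∈ (RQ j).support → False := by
    intro i j hij c hc v hv hv'
    have hvs : v ∈ s := hRQs j v hv'
    have hvc : v = bb (c i) := hRlast (c i) v hv hvs
    subst hvc
    obtain ⟨u, hu, huv⟩ := hRQmem j _ hv'
    have : u = eb (c i) := Subtype.ext huv
    subst this
    exact hQdisj j i (Ne.symm hij) (eb (c i)) hu (hQmem i c hc)
  refine ⟨fun i => (R (Sum.inl i)).append ((RQ i).append (R (Sum.inr i)).reverse),
    ?_, ?_⟩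
  · -- each concatenation is a path
    intro i
    have hinlr : (Sum.inl i : ι) ≠ Sum.inr i := by simp
    have hinner : ((RQ i).append (R (Sum.inr i)).reverse).IsPath := by
      refine append_isPath (hRQpath i) ((hRpath (Sum.inr i)).reverse) ?_
      intro v hv hv'
      simp only [Walk.support_reverse, List.mem_reverse] at hv'
      exact hRlast (Sum.inr i) v hv' (hRQs i v hv)
    refine append_isPath (hRpath (Sum.inl i)) hinner ?_
    intro v hv hv'
    rcases (Walk.mem_support_append_iff _ _).1 hv' with h | h
    · exact hRlast (Sum.inl i) v hv (hRQs i v h)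
    · replace h : v ∈ (R (Sum.inr i)).support :=
        List.mem_reverse.1 ((congrArg (v ∈ ·) (Walk.support_reverse (R (Sum.inr i)))).mp h)
      exact absurd h (hRd (Sum.inl i) (Sum.inr i) hinlr v hv)
  · -- pairwise disjointness
    intro i j hij v hvi hvj
    have hne : ∀ (c d : Fin k → ι), (c = Sum.inl ∨ c = Sum.inr) →
        (d = Sum.inl ∨ d = Sum.inr) → c i ≠ d j := by
      rintro c d (rfl | rfl) (rfl | rfl) <;> intro hEq <;>
        first
          | exact hij (Sum.inl.inj hEq)
          | exact hij (Sum.inr.inj hEq)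
          | simp at hEq
    have hvi' : v ∈ (R (Sum.inl i)).support ∨ v ∈ (RQ i).support ∨
        v ∈ (R (Sum.inr i)).support := by
      rcases (Walk.mem_support_append_iff _ _).1 hvi with h | h
      · exact Or.inl h
      · rcases (Walk.mem_support_append_iff _ _).1 h with h' | h'
        · exact Or.inr (Or.inl h')
        · replace h' := List.mem_reverse.1 ((congrArg (v ∈ ·) (Walk.support_reverse _)).mp h')
          exact Or.inr (Or.inr h')
    have hvj' : v ∈ (R (Sum.inl j)).support ∨ v ∈ (RQ j).support ∨
        v ∈ (R (Sum.inr j)).support := by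
      rcases (Walk.mem_support_append_iff _ _).1 hvj with h | h
      · exact Or.inl h
      · rcases (Walk.mem_support_append_iff _ _).1 h with h' | h'
        · exact Or.inr (Or.inl h')
        · replace h' := List.mem_reverse.1 ((congrArg (v ∈ ·) (Walk.support_reverse _)).mp h')
          exact Or.inr (Or.inr h')
    rcases hvi' with h1 | h1 | h1 <;> rcases hvj' with h2 | h2 | h2
    · exact hRd _ _ (hne _ _ (Or.inl rfl) (Or.inl rfl)) v h1 h2
    · exact hcross i j hij Sum.inl (Or.inl rfl) v h1 h2
    · exact hRd _ _ (hne _ _ (Or.inl rfl) (Or.inr rfl)) v h1 h2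
    · exact hcross j i (Ne.symm hij) Sum.inl (Or.inl rfl) v h2 h1
    · -- v in RQ i and RQ j
      obtain ⟨u, hu, rfl⟩ := hRQmem i v h1
      obtain ⟨u', hu', huu⟩ := hRQmem j _ h2
      have : u' = u := Subtype.ext huu
      subst this
      exact hQdisj i j hij u' hu hu'
    · exact hcross j i (Ne.symm hij) Sum.inr (Or.inr rfl) v h2 h1
    · exact hRd _ _ (hne _ _ (Or.inr rfl) (Or.inl rfl)) v h1 h2
    · exact hcross i j hij Sum.inr (Or.inr rfl) v h1 h2
    · exact hRd _ _ (hne _ _ (Or.inr rfl) (Or.inr rfl)) v h1 h2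
end

section
/- Let d ≥ 2 and let X be a set of exactly d vertices of the d-cube graph Q_d such that the induced subgraph of Q_d on V(Q_d) \ X is disconnected. Then X is precisely the set of all neighbours of some vertex v of Q_d, and the induced subgraph on V(Q_d) \ X has exactly two connected components, one of which is the single vertex v. -/
namespace CubeSep
open Finset

attribute [local instance] Classical.propDecidable

noncomputable def bd (d : ℕ) (A : Finset (Fin d → Bool)) : Finset (Fin d → Bool) :=
  Finset.univ.filter (fun y => y ∉ A ∧ ∃ a ∈ A, (cubeGraph d).Adj a y)

lemma mem_bd {d : ℕ} {A : Finset (Fin d → Bool)} {y : Fin d → Bool} :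
    y ∈ bd d A ↔ y ∉ A ∧ ∃ a ∈ A, (cubeGraph d).Adj a y := by
  simp [bd]

noncomputable def slice {d : ℕ} (i : Fin (d+1)) (c : Bool)
    (A : Finset (Fin (d+1) → Bool)) : Finset (Fin d → Bool) :=
  Finset.univ.filter (fun x => i.insertNth c x ∈ A)

lemma mem_slice {d : ℕ} {i : Fin (d+1)} {c : Bool} {A : Finset (Fin (d+1) → Bool)}
    {x : Fin d → Bool} : x ∈ slice i c A ↔ i.insertNth c x ∈ A := by
  simp [slice]

lemma insertNth_inj {d : ℕ} (i : Fin (d+1)) (c : Bool) :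
    Function.Injective (fun x : Fin d → Bool => (i.insertNth c x : Fin (d+1) → Bool)) := by
  intro x y h
  have := congrArg (Fin.removeNth i) h
  simpa using this

lemma adj_insertNth_same {d : ℕ} (i : Fin (d+1)) (c : Bool) (x y : Fin d → Bool) :
    (cubeGraph (d+1)).Adj (i.insertNth c x) (i.insertNth c y) ↔ (cubeGraph d).Adj x y := by
  constructor
  · rintro ⟨j, hj, hrest⟩
    have hji : j ≠ i := by
      rintro rfl; simp at hj
    obtain ⟨k, rfl⟩ := Fin.exists_succAbove_eq hji
    refine ⟨k, by simpa using hj, fun l hl => ?_⟩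
    have := hrest (i.succAbove l) (by
      intro h; exact hl (i.succAbove_right_injective h))
    simpa using this
  · rintro ⟨k, hk, hrest⟩
    refine ⟨i.succAbove k, by simpa using hk, fun j hj => ?_⟩
    rcases eq_or_ne j i with rfl | hji
    · simp
    · obtain ⟨l, rfl⟩ := Fin.exists_succAbove_eq hji
      have hl : l ≠ k := by rintro rfl; exact hj rfl
      simpa using hrest l hl

lemma adj_insertNth_flip {d : ℕ} (i : Fin (d+1)) (c : Bool) (x : Fin d → Bool) :
    (cubeGraph (d+1)).Adj (i.insertNth c x) (i.insertNth (!c) x) := by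
  refine ⟨i, by simp, fun j hj => ?_⟩
  obtain ⟨l, rfl⟩ := Fin.exists_succAbove_eq hj
  simp

lemma slice_nonempty {d : ℕ} {i : Fin (d+1)} {c : Bool} {A : Finset (Fin (d+1) → Bool)}
    {a : Fin (d+1) → Bool} (ha : a ∈ A) (hac : a i = c) : (slice i c A).Nonempty := by
  refine ⟨Fin.removeNth i a, ?_⟩
  rw [mem_slice]
  rw [← hac, Fin.insertNth_self_removeNth]
  exact ha

end CubeSep

namespace CubeSep
open Finset

-- boundary of a slice injects into the corresponding half of the boundary
lemma slice_bd_le {d : ℕ} (i : Fin (d+1)) (c : Bool) (A : Finset (Fin (d+1) → Bool)) :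
    (bd d (slice i c A)).card ≤ ((bd (d+1) A).filter (fun x => x i = c)).card := by
  classical
  apply Finset.card_le_card_of_injOn (fun y => (i.insertNth c y : Fin (d+1) → Bool))
  · intro y hy
    rw [Finset.mem_coe, mem_bd] at hy
    obtain ⟨hyA, a', ha', hadj⟩ := hy
    rw [mem_slice] at ha'
    simp only [Finset.mem_coe, mem_filter, mem_bd]
    refine ⟨⟨?_, ⟨i.insertNth c a', ha', (adj_insertNth_same i c a' y).2 hadj⟩⟩, by simp⟩
    rw [← mem_slice]; exact hyA
  · intro a _ b _ h
    exact insertNth_inj i c h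

-- a witness outside the closed neighbourhood restricts to slices
lemma slice_witness {d : ℕ} (i : Fin (d+1)) (c : Bool) (A : Finset (Fin (d+1) → Bool))
    (w : Fin (d+1) → Bool) (hwA : w ∉ A) (hw : ∀ a ∈ A, ¬ (cubeGraph (d+1)).Adj a w)
    (hwc : w i = c) :
    Fin.removeNth i w ∉ slice i c A ∧
      ∀ a' ∈ slice i c A, ¬ (cubeGraph d).Adj a' (Fin.removeNth i w) := by
  have hins : (i.insertNth c (Fin.removeNth i w) : Fin (d+1) → Bool) = w := by
    rw [← hwc, Fin.insertNth_self_removeNth]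
  constructor
  · rw [mem_slice, hins]; exact hwA
  · intro a' ha' hadj
    rw [mem_slice] at ha'
    have := (adj_insertNth_same i c a' (Fin.removeNth i w)).2 hadj
    rw [hins] at this
    exact hw _ ha' this

-- the "flip" of an element of A across direction i lies in the boundary,
-- provided A lies in the half {x i = c}
lemma flip_mem_bd {d : ℕ} (i : Fin (d+1)) (c : Bool) (A : Finset (Fin (d+1) → Bool))
    (hhalf : ∀ x ∈ A, x i = c) {a : Fin (d+1) → Bool} (ha : a ∈ A) :
    (i.insertNth (!c) (Fin.removeNth i a) : Fin (d+1) → Bool) ∈ bd (d+1) A := by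
  rw [mem_bd]
  have hins : (i.insertNth c (Fin.removeNth i a) : Fin (d+1) → Bool) = a := by
    rw [← hhalf a ha, Fin.insertNth_self_removeNth]
  constructor
  · intro hmem
    have := hhalf _ hmem
    simp at this
  · refine ⟨a, ha, ?_⟩
    conv_lhs => rw [← hins]
    exact adj_insertNth_flip i c (Fin.removeNth i a)

lemma half_card (d : ℕ)
    (IH : ∀ (A : Finset (Fin d → Bool)) (z : Fin d → Bool), A.Nonempty → z ∉ A →
      (∀ a ∈ A, ¬ (cubeGraph d).Adj a z) → d ≤ (bd d A).card)
    (i : Fin (d+1)) (c : Bool) (A : Finset (Fin (d+1) → Bool))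
    (hA : A.Nonempty) (hhalf : ∀ x ∈ A, x i = c) :
    d + 1 ≤ (bd (d+1) A).card := by
  classical
  by_cases hcover : ∀ x : Fin (d+1) → Bool, x i = c → x ∈ A ∨ x ∈ bd (d+1) A
  · -- A together with its boundary covers the whole half: boundary is huge
    set T : Finset (Fin (d+1) → Bool) :=
      A.image (fun a => (i.insertNth (!c) (Fin.removeNth i a) : Fin (d+1) → Bool)) with hT
    have hTsub : T ⊆ bd (d+1) A := by
      intro x hx
      rw [hT, mem_image] at hx
      obtain ⟨a, ha, rfl⟩ := hx
      exact flip_mem_bd i c A hhalf ha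
    have hTcard : T.card = A.card := by
      rw [hT]
      apply Finset.card_image_of_injOn
      intro a ha b hb h
      have h2 : Fin.removeNth i a = Fin.removeNth i b := insertNth_inj i (!c) h
      have ha' : (i.insertNth c (Fin.removeNth i a) : Fin (d+1) → Bool) = a := by
        rw [← hhalf a ha, Fin.insertNth_self_removeNth]
      have hb' : (i.insertNth c (Fin.removeNth i b) : Fin (d+1) → Bool) = b := by
        rw [← hhalf b hb, Fin.insertNth_self_removeNth]
      rw [← ha', ← hb', h2]
    set U : Finset (Fin (d+1) → Bool) := (bd (d+1) A).filter (fun x => x i = c) with hU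
    have hTU : Disjoint T U := by
      rw [Finset.disjoint_left]
      intro x hx hxU
      rw [hT, mem_image] at hx
      obtain ⟨a, ha, rfl⟩ := hx
      rw [hU, mem_filter] at hxU
      simp at hxU
    -- the half {x i = c} is covered by A and U
    set Hc : Finset (Fin (d+1) → Bool) := Finset.univ.filter (fun x => x i = c) with hHc
    have hHcover : Hc ⊆ A ∪ U := by
      intro x hx
      rw [hHc, mem_filter] at hx
      rcases hcover x hx.2 with h | h
      · exact mem_union_left _ h
      · exact mem_union_right _ (by rw [hU, mem_filter]; exact ⟨h, hx.2⟩)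
    have hHcard : Hc.card = 2 ^ d := by
      have : Hc = Finset.univ.image (fun y : Fin d → Bool => (i.insertNth c y : Fin (d+1) → Bool)) := by
        apply Finset.ext
        intro x
        rw [hHc, mem_filter, mem_image]
        constructor
        · rintro ⟨-, hx⟩
          exact ⟨Fin.removeNth i x, mem_univ _, by rw [← hx, Fin.insertNth_self_removeNth]⟩
        · rintro ⟨y, -, rfl⟩
          exact ⟨mem_univ _, by simp⟩
      rw [this, Finset.card_image_of_injective _ (insertNth_inj i c)]
      simp
    have h1 : Hc.card ≤ A.card + U.card :=
      le_trans (Finset.card_le_card hHcover) (Finset.card_union_le _ _)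
    have h2 : T.card + U.card ≤ (bd (d+1) A).card := by
      rw [← Finset.card_union_of_disjoint hTU]
      apply Finset.card_le_card
      exact Finset.union_subset hTsub (by rw [hU]; exact filter_subset _ _)
    have h3 : d + 1 ≤ 2 ^ d := by have := Nat.lt_two_pow_self (n := d); omega
    omega
  · push_neg at hcover
    obtain ⟨h, hhc, hhA, hhbd⟩ := hcover
    have hhadj : ∀ a ∈ A, ¬ (cubeGraph (d+1)).Adj a h := by
      intro a ha hadj
      exact hhbd (mem_bd.2 ⟨hhA, a, ha, hadj⟩)
    obtain ⟨a₀, ha₀⟩ := hA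
    have hA' : (slice i c A).Nonempty := slice_nonempty ha₀ (hhalf a₀ ha₀)
    obtain ⟨hz1, hz2⟩ := slice_witness i c A h hhA hhadj hhc
    have hIH := IH (slice i c A) (Fin.removeNth i h) hA' hz1 hz2
    have hle := slice_bd_le i c A
    have hflip := flip_mem_bd i c A hhalf ha₀
    have hnot : (i.insertNth (!c) (Fin.removeNth i a₀) : Fin (d+1) → Bool) ∉
        ((bd (d+1) A).filter (fun x => x i = c)) := by
      rw [mem_filter]
      rintro ⟨-, hx⟩
      simp at hx
    have hfin : ((bd (d+1) A).filter (fun x => x i = c)).card + 1 ≤ (bd (d+1) A).card := by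
      have hsub : insert (i.insertNth (!c) (Fin.removeNth i a₀) : Fin (d+1) → Bool)
          ((bd (d+1) A).filter (fun x => x i = c)) ⊆ bd (d+1) A :=
        Finset.insert_subset hflip (filter_subset _ _)
      calc ((bd (d+1) A).filter (fun x => x i = c)).card + 1
          = (insert (i.insertNth (!c) (Fin.removeNth i a₀) : Fin (d+1) → Bool)
              ((bd (d+1) A).filter (fun x => x i = c))).card := (Finset.card_insert_of_notMem hnot).symm
        _ ≤ (bd (d+1) A).card := Finset.card_le_card hsub
    exact le_trans (Nat.succ_le_succ (le_trans hIH hle)) hfin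

lemma bd_card : ∀ (d : ℕ) (A : Finset (Fin d → Bool)) (z : Fin d → Bool),
    A.Nonempty → z ∉ A → (∀ a ∈ A, ¬ (cubeGraph d).Adj a z) → d ≤ (bd d A).card := by
  intro d
  induction d with
  | zero => intro A z _ _ _; exact Nat.zero_le _
  | succ d IH =>
    intro A z hA hzA hzadj
    classical
    set B : Finset (Fin (d+1) → Bool) :=
      Finset.univ.filter (fun w => w ∉ A ∧ ∀ a ∈ A, ¬ (cubeGraph (d+1)).Adj a w) with hBdef
    have memB : ∀ w, w ∈ B ↔ (w ∉ A ∧ ∀ a ∈ A, ¬ (cubeGraph (d+1)).Adj a w) := by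
      intro w; simp [hBdef]
    have hzB : z ∈ B := (memB z).2 ⟨hzA, hzadj⟩
    have hBbd : bd (d+1) B ⊆ bd (d+1) A := by
      intro w hw
      rw [mem_bd] at hw ⊢
      obtain ⟨hwB, b, hbB, hadj⟩ := hw
      rw [memB] at hbB
      have hwA : w ∉ A := fun hwA => (hbB.2 w hwA) hadj.symm
      refine ⟨hwA, ?_⟩
      by_contra hno
      push_neg at hno
      exact hwB ((memB w).2 ⟨hwA, hno⟩)
    by_cases hcA : ∃ i c, ∀ x ∈ A, x i = c
    · obtain ⟨i, c, h⟩ := hcA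
      exact half_card d IH i c A hA h
    by_cases hcB : ∃ i c, ∀ x ∈ B, x i = c
    · obtain ⟨i, c, h⟩ := hcB
      exact le_trans (half_card d IH i c B ⟨z, hzB⟩ h) (Finset.card_le_card hBbd)
    push_neg at hcA hcB
    have hcA' : ∀ c : Bool, ∃ x ∈ A, x 0 = c := by
      intro c
      obtain ⟨x, hx, hne⟩ := hcA 0 (!c)
      exact ⟨x, hx, by cases h0 : x 0 <;> cases c <;> simp_all⟩
    have hcB' : ∀ c : Bool, ∃ x ∈ B, x 0 = c := by
      intro c
      obtain ⟨x, hx, hne⟩ := hcB 0 (!c)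
      exact ⟨x, hx, by cases h0 : x 0 <;> cases c <;> simp_all⟩
    rcases Nat.eq_zero_or_pos d with rfl | hd
    · -- dimension 1 : impossible, since A and B are disjoint but slices meet
      exfalso
      obtain ⟨a, haA, ha0⟩ := hcA' true
      obtain ⟨b, hbB, hb0⟩ := hcB' true
      have hab : a = b := by
        funext j
        rw [Fin.eq_zero j, ha0, hb0]
      rw [memB] at hbB
      exact hbB.1 (hab ▸ haA)
    · -- main case : both A and B meet both halves in direction 0
      have key : ∀ c : Bool, d ≤ ((bd (d+1) A).filter (fun x => x (0 : Fin (d+1)) = c)).card := by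
        intro c
        obtain ⟨a, haA, ha0⟩ := hcA' c
        obtain ⟨w, hwB, hw0⟩ := hcB' c
        rw [memB] at hwB
        obtain ⟨hz1, hz2⟩ := slice_witness (0 : Fin (d+1)) c A w hwB.1 hwB.2 hw0
        exact le_trans (IH (slice 0 c A) (Fin.removeNth 0 w)
          (slice_nonempty haA ha0) hz1 hz2) (slice_bd_le 0 c A)
      have hdisj : Disjoint ((bd (d+1) A).filter (fun x => x (0 : Fin (d+1)) = false))
          ((bd (d+1) A).filter (fun x => x (0 : Fin (d+1)) = true)) := by
        rw [Finset.disjoint_left]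
        intro x hx hx'
        rw [mem_filter] at hx hx'
        rw [hx.2] at hx'
        exact absurd hx'.2 (by simp)
      have hsum : d + d ≤ (bd (d+1) A).card := by
        have := Finset.card_union_of_disjoint hdisj
        have hsub : ((bd (d+1) A).filter (fun x => x (0 : Fin (d+1)) = false)) ∪
            ((bd (d+1) A).filter (fun x => x (0 : Fin (d+1)) = true)) ⊆ bd (d+1) A :=
          Finset.union_subset (filter_subset _ _) (filter_subset _ _)
        have h2 := Finset.card_le_card hsub
        have hf := key false
        have ht := key true
        rw [this] at h2
        exact le_trans (Nat.add_le_add hf ht) h2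
      have hstep : d + 1 ≤ d + d := by omega
      exact le_trans hstep hsum

lemma slice_nonempty_all {d : ℕ} {i : Fin (d+1)} {A : Finset (Fin (d+1) → Bool)}
    {a b : Fin (d+1) → Bool} (ha : a ∈ A) (hb : b ∈ A) (hi : a i ≠ b i) :
    ∀ e : Bool, (slice i e A).Nonempty := by
  intro e
  by_cases hec : e = b i
  · exact slice_nonempty hb hec.symm
  · refine slice_nonempty ha ?_
    cases h1 : a i <;> cases h2 : b i <;> cases e <;> simp_all

lemma bd_card2 (d : ℕ) (hd : 2 ≤ d) (A : Finset (Fin (d+1) → Bool))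
    (a b : Fin (d+1) → Bool) (ha : a ∈ A) (hb : b ∈ A)
    (hab : (cubeGraph (d+1)).Adj a b)
    (z₁ z₂ : Fin (d+1) → Bool) (hz : z₁ ≠ z₂)
    (hz₁A : z₁ ∉ A) (hz₁adj : ∀ x ∈ A, ¬ (cubeGraph (d+1)).Adj x z₁)
    (hz₂A : z₂ ∉ A) (hz₂adj : ∀ x ∈ A, ¬ (cubeGraph (d+1)).Adj x z₂) :
    d + 2 ≤ (bd (d+1) A).card := by
  classical
  obtain ⟨i, hi, -⟩ := hab
  have hslice : ∀ e : Bool, (slice i e A).Nonempty := slice_nonempty_all ha hb hi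
  have hkey : ∀ (w : Fin (d+1) → Bool), w ∉ A → (∀ x ∈ A, ¬ (cubeGraph (d+1)).Adj x w) →
      d ≤ ((bd (d+1) A).filter (fun x => x i = w i)).card := by
    intro w hwA hwadj
    obtain ⟨hz1, hz2⟩ := slice_witness i (w i) A w hwA hwadj rfl
    exact le_trans (bd_card d (slice i (w i) A) (Fin.removeNth i w)
      (hslice (w i)) hz1 hz2) (slice_bd_le i (w i) A)
  by_cases hboth : ∃ w, (w ∉ A ∧ ∀ x ∈ A, ¬ (cubeGraph (d+1)).Adj x w) ∧ w i ≠ z₁ i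
  · -- witnesses in both halves : two applications of bd_card
    obtain ⟨w, ⟨hwA, hwadj⟩, hwz⟩ := hboth
    have h1 := hkey z₁ hz₁A hz₁adj
    have h2 := hkey w hwA hwadj
    have hdisj : Disjoint ((bd (d+1) A).filter (fun x => x i = z₁ i))
        ((bd (d+1) A).filter (fun x => x i = w i)) := by
      rw [Finset.disjoint_left]
      intro x hx hx'
      rw [mem_filter] at hx hx'
      exact hwz (by rw [← hx'.2, hx.2])
    have hsub : ((bd (d+1) A).filter (fun x => x i = z₁ i)) ∪
        ((bd (d+1) A).filter (fun x => x i = w i)) ⊆ bd (d+1) A :=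
      Finset.union_subset (filter_subset _ _) (filter_subset _ _)
    have h3 := Finset.card_le_card hsub
    rw [Finset.card_union_of_disjoint hdisj] at h3
    have h4 : d + d ≤ (bd (d+1) A).card := le_trans (Nat.add_le_add h1 h2) h3
    exact le_trans (Nat.add_le_add_left hd d) h4
  · -- all witnesses in the same half : use the two shifts of z₁, z₂
    push_neg at hboth
    have hz₂i : z₂ i = z₁ i := hboth z₂ ⟨hz₂A, hz₂adj⟩
    have hσ : ∀ (w : Fin (d+1) → Bool), w ∉ A → (∀ x ∈ A, ¬ (cubeGraph (d+1)).Adj x w) →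
        w i = z₁ i → (i.insertNth (!(z₁ i)) (Fin.removeNth i w) : Fin (d+1) → Bool) ∈ bd (d+1) A := by
      intro w hwA hwadj hwe
      have hins : (i.insertNth (z₁ i) (Fin.removeNth i w) : Fin (d+1) → Bool) = w := by
        rw [← hwe, Fin.insertNth_self_removeNth]
      have hadjflip : (cubeGraph (d+1)).Adj
          (i.insertNth (!(z₁ i)) (Fin.removeNth i w) : Fin (d+1) → Bool) w := by
        conv_rhs => rw [← hins]
        have := adj_insertNth_flip i (z₁ i) (Fin.removeNth i w)
        exact this.symm
      have hσA : (i.insertNth (!(z₁ i)) (Fin.removeNth i w) : Fin (d+1) → Bool) ∉ A := by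
        intro hmem
        exact hwadj _ hmem (hadjflip.symm).symm
      rw [mem_bd]
      refine ⟨hσA, ?_⟩
      by_contra hno
      push_neg at hno
      have := hboth _ ⟨hσA, hno⟩
      simp at this
    have hs1 := hσ z₁ hz₁A hz₁adj rfl
    have hs2 := hσ z₂ hz₂A hz₂adj hz₂i
    have hsne : (i.insertNth (!(z₁ i)) (Fin.removeNth i z₁) : Fin (d+1) → Bool) ≠
        (i.insertNth (!(z₁ i)) (Fin.removeNth i z₂) : Fin (d+1) → Bool) := by
      intro hcontra
      have h2 := insertNth_inj i (!(z₁ i)) hcontra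
      apply hz
      have e1 : (i.insertNth (z₁ i) (Fin.removeNth i z₁) : Fin (d+1) → Bool) = z₁ := by
        rw [Fin.insertNth_self_removeNth]
      have e2 : (i.insertNth (z₁ i) (Fin.removeNth i z₂) : Fin (d+1) → Bool) = z₂ := by
        conv_lhs => rw [← hz₂i]
        rw [Fin.insertNth_self_removeNth]
      rw [← e1, ← e2, h2]
    have hnotf : ∀ y : Fin d → Bool,
        (i.insertNth (!(z₁ i)) y : Fin (d+1) → Bool) ∉ (bd (d+1) A).filter (fun x => x i = z₁ i) := by
      intro y hy
      rw [mem_filter] at hy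
      have := hy.2
      simp at this
    have h1 := hkey z₁ hz₁A hz₁adj
    have hsub2 : insert (i.insertNth (!(z₁ i)) (Fin.removeNth i z₁) : Fin (d+1) → Bool)
        (insert (i.insertNth (!(z₁ i)) (Fin.removeNth i z₂) : Fin (d+1) → Bool)
          ((bd (d+1) A).filter (fun x => x i = z₁ i))) ⊆ bd (d+1) A :=
      Finset.insert_subset hs1 (Finset.insert_subset hs2 (filter_subset _ _))
    have hc2 : ((bd (d+1) A).filter (fun x => x i = z₁ i)).card + 2 ≤ (bd (d+1) A).card := by
      have hn2 : (i.insertNth (!(z₁ i)) (Fin.removeNth i z₂) : Fin (d+1) → Bool) ∉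
          ((bd (d+1) A).filter (fun x => x i = z₁ i)) := hnotf _
      have hn1 : (i.insertNth (!(z₁ i)) (Fin.removeNth i z₁) : Fin (d+1) → Bool) ∉
          insert (i.insertNth (!(z₁ i)) (Fin.removeNth i z₂) : Fin (d+1) → Bool)
            ((bd (d+1) A).filter (fun x => x i = z₁ i)) := by
        rw [Finset.mem_insert]
        rintro (h | h)
        · exact hsne h
        · exact hnotf _ h
      have := Finset.card_le_card hsub2
      rw [Finset.card_insert_of_notMem hn1, Finset.card_insert_of_notMem hn2] at this
      exact this
    exact le_trans (Nat.add_le_add_right h1 2) hc2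

end CubeSep

namespace CubeSep
open Finset

attribute [local instance] Classical.propDecidable

noncomputable def Df {d : ℕ} (x y : Fin d → Bool) : Finset (Fin d) :=
  Finset.univ.filter (fun j => x j ≠ y j)

lemma mem_Df {d : ℕ} {x y : Fin d → Bool} {j : Fin d} : j ∈ Df x y ↔ x j ≠ y j := by
  simp [Df]

lemma Df_comm {d : ℕ} (x y : Fin d → Bool) : Df x y = Df y x := by
  apply Finset.ext; intro j; rw [mem_Df, mem_Df, ne_comm]

lemma Df_eq_empty {d : ℕ} {x y : Fin d → Bool} : Df x y = ∅ ↔ x = y := by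
  constructor
  · intro h
    funext j
    by_contra hj
    have : j ∈ Df x y := mem_Df.2 hj
    simp [h] at this
  · rintro rfl
    apply Finset.eq_empty_of_forall_notMem
    intro j hj
    exact (mem_Df.1 hj) rfl

lemma adj_iff_Df {d : ℕ} {x y : Fin d → Bool} :
    (cubeGraph d).Adj x y ↔ ∃ i, Df x y = {i} := by
  constructor
  · rintro ⟨i, hi, hrest⟩
    refine ⟨i, ?_⟩
    apply Finset.ext
    intro j
    rw [mem_Df, Finset.mem_singleton]
    constructor
    · intro hj
      by_contra hji
      exact hj (hrest j hji)
    · rintro rfl; exact hi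
  · rintro ⟨i, h⟩
    refine ⟨i, ?_, ?_⟩
    · exact mem_Df.1 (h ▸ Finset.mem_singleton_self i)
    · intro j hj
      by_contra hne
      have : j ∈ Df x y := mem_Df.2 hne
      rw [h, Finset.mem_singleton] at this
      exact hj this

noncomputable def flp {d : ℕ} (i : Fin d) (x : Fin d → Bool) : Fin d → Bool :=
  Function.update x i (!(x i))

lemma flp_apply_same {d : ℕ} (i : Fin d) (x : Fin d → Bool) : flp i x i = !(x i) := by
  simp [flp]

lemma flp_apply_ne {d : ℕ} {i j : Fin d} (x : Fin d → Bool) (h : j ≠ i) :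
    flp i x j = x j := by
  simp [flp, Function.update_apply, h]

lemma adj_flp {d : ℕ} (i : Fin d) (x : Fin d → Bool) :
    (cubeGraph d).Adj x (flp i x) := by
  refine ⟨i, ?_, ?_⟩
  · rw [flp_apply_same]; cases x i <;> simp
  · intro j hj; rw [flp_apply_ne x hj]

lemma Df_flp_mem {d : ℕ} {i : Fin d} {x y : Fin d → Bool} (h : i ∈ Df x y) :
    Df (flp i x) y = (Df x y).erase i := by
  apply Finset.ext
  intro j
  rw [Finset.mem_erase, mem_Df, mem_Df]
  rcases eq_or_ne j i with rfl | hji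
  · rw [flp_apply_same]
    have := mem_Df.1 h
    constructor
    · intro hc; exfalso; revert hc this; cases x j <;> cases y j <;> simp
    · rintro ⟨hc, -⟩; exact absurd rfl hc
  · rw [flp_apply_ne x hji]
    exact ⟨fun hc => ⟨hji, hc⟩, fun hc => hc.2⟩

lemma Df_flp_not_mem {d : ℕ} {i : Fin d} {x y : Fin d → Bool} (h : i ∉ Df x y) :
    Df (flp i x) y = insert i (Df x y) := by
  apply Finset.ext
  intro j
  rw [Finset.mem_insert, mem_Df, mem_Df]
  rcases eq_or_ne j i with rfl | hji
  · rw [flp_apply_same]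
    have : x j = y j := by
      by_contra hc; exact h (mem_Df.2 hc)
    rw [← this]
    constructor
    · intro; left; rfl
    · intro; cases x j <;> simp
  · rw [flp_apply_ne x hji]
    constructor
    · intro hc; right; exact hc
    · rintro (rfl | hc)
      · exact absurd rfl hji
      · exact hc

lemma Df_flp_self {d : ℕ} {i : Fin d} {x v : Fin d → Bool} (h : i ∈ Df x v) :
    Df (flp i x) v = (Df x v).erase i := Df_flp_mem h

-- main reachability lemma in the complement of a vertex neighbourhood
lemma reach_in_compl (d : ℕ) (X : Finset (Fin d → Bool)) (v : Fin d → Bool)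
    (hN : ∀ w, w ∈ X ↔ (cubeGraph d).Adj v w) :
    ∀ (n : ℕ) (x y : Fin d → Bool) (hx : x ∉ X) (hy : y ∉ X), x ≠ v → y ≠ v →
      (Df x y).card ≤ n →
      ((cubeGraph d).induce {x : Fin d → Bool | x ∉ X}).Reachable ⟨x, hx⟩ ⟨y, hy⟩ := by
  intro n
  induction n with
  | zero =>
    intro x y hx hy _ _ hcard
    have : Df x y = ∅ := Finset.card_eq_zero.1 (Nat.le_zero.1 hcard)
    have hxy : x = y := Df_eq_empty.1 this
    subst hxy
    rfl
  | succ n IH =>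
    intro x y hx hy hxv hyv hcard
    by_cases hxy : x = y
    · subst hxy; rfl
    have hne : (Df x y).Nonempty :=
      Finset.nonempty_iff_ne_empty.2 (fun h => hxy (Df_eq_empty.1 h))
    -- a sufficient condition to take one step
    have step : ∀ i ∈ Df x y, flp i x ≠ v → flp i x ∉ X →
        ((cubeGraph d).induce {x : Fin d → Bool | x ∉ X}).Reachable ⟨x, hx⟩ ⟨y, hy⟩ := by
      intro i hi h1 h2
      have hadj : ((cubeGraph d).induce {x : Fin d → Bool | x ∉ X}).Adj ⟨x, hx⟩ ⟨flp i x, h2⟩ :=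
        adj_flp i x
      have hcard' : (Df (flp i x) y).card ≤ n := by
        rw [Df_flp_mem hi]
        have := Finset.card_erase_of_mem hi
        omega
      exact (hadj.reachable).trans (IH (flp i x) y h2 hy h1 hyv hcard')
    have hnotadjx : ¬ (cubeGraph d).Adj v x := fun h => hx ((hN x).2 h)
    have hnotadjy : ¬ (cubeGraph d).Adj v y := fun h => hy ((hN y).2 h)
    by_cases hc : ∃ i ∈ Df x y, x i = v i
    · obtain ⟨i, hi, hiv⟩ := hc
      have hinotin : i ∉ Df x v := by rw [mem_Df]; simp [hiv]
      have hDff : Df (flp i x) v = insert i (Df x v) := Df_flp_not_mem hinotin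
      have hxvne : (Df x v).Nonempty :=
        Finset.nonempty_iff_ne_empty.2 (fun h => hxv (Df_eq_empty.1 h))
      have h2le : 2 ≤ (Df (flp i x) v).card := by
        rw [hDff, Finset.card_insert_of_notMem hinotin]
        have := Finset.card_pos.2 hxvne
        omega
      have h1 : flp i x ≠ v := by
        intro h
        rw [h] at h2le
        rw [show Df v v = ∅ from Df_eq_empty.2 rfl] at h2le
        simp at h2le
      have h2 : flp i x ∉ X := by
        rw [hN]
        intro hadj
        obtain ⟨j, hj⟩ := adj_iff_Df.1 hadj
        rw [Df_comm] at hj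
        rw [hj, Finset.card_singleton] at h2le
        omega
      exact step i hi h1 h2
    · push_neg at hc
      have hsub : Df x y ⊆ Df x v := by
        intro i hi
        rw [mem_Df]
        exact hc i hi
      have hxvne : (Df x v).Nonempty :=
        Finset.nonempty_iff_ne_empty.2 (fun h => hxv (Df_eq_empty.1 h))
      have hc1 : (Df x v).card ≠ 1 := by
        intro h
        obtain ⟨j, hj⟩ := Finset.card_eq_one.1 h
        exact hnotadjx (adj_iff_Df.2 ⟨j, by rw [Df_comm]; exact hj⟩)
      have hc0 : (Df x v).card ≠ 0 := by
        intro h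
        exact absurd (Finset.card_eq_zero.1 h) (Finset.nonempty_iff_ne_empty.1 hxvne)
      have h2le : 2 ≤ (Df x v).card := by omega
      by_cases h3 : 3 ≤ (Df x v).card
      · -- plenty of room : flip any differing coordinate
        obtain ⟨i, hi⟩ := hne
        have hixv : i ∈ Df x v := hsub hi
        have hDf : Df (flp i x) v = (Df x v).erase i := Df_flp_mem hixv
        have hcard2 : 2 ≤ (Df (flp i x) v).card := by
          rw [hDf]
          have := Finset.card_erase_of_mem hixv
          omega
        have h1 : flp i x ≠ v := by
          intro h
          rw [h, show Df v v = ∅ from Df_eq_empty.2 rfl] at hcard2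
          simp at hcard2
        have h2 : flp i x ∉ X := by
          rw [hN]
          intro hadj
          obtain ⟨j, hj⟩ := adj_iff_Df.1 hadj
          rw [Df_comm] at hj
          rw [hj, Finset.card_singleton] at hcard2
          omega
        exact step i hi h1 h2
      · -- |Df x v| = 2
        have h2eq : (Df x v).card = 2 := by omega
        by_cases hfull : Df x y = Df x v
        · -- then y = v, contradiction
          exfalso
          apply hyv
          funext j
          by_cases hj : j ∈ Df x v
          · have hj1 : x j ≠ y j := mem_Df.1 (hfull ▸ hj)
            have hj2 : x j ≠ v j := mem_Df.1 hj
            revert hj1 hj2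
            cases x j <;> cases y j <;> cases v j <;> simp
          · have hj1 : x j = y j := by
              by_contra hc'
              exact hj (hfull ▸ mem_Df.2 hc')
            have hj2 : x j = v j := by
              by_contra hc'
              exact hj (mem_Df.2 hc')
            rw [← hj1, hj2]
        · -- then Df x y is a single coordinate and y is adjacent to v : contradiction
          exfalso
          have hlt : (Df x y).card < 2 := by
            have hle := Finset.card_le_card hsub
            rcases lt_or_eq_of_le hle with h | h
            · omega
            · exact absurd (Finset.eq_of_subset_of_card_le hsub (le_of_eq h.symm)) hfull
          have hne' := Finset.card_pos.2 hne
          have h1eq : (Df x y).card = 1 := by omega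
          obtain ⟨i, hi⟩ := Finset.card_eq_one.1 h1eq
          have hixy : i ∈ Df x y := hi ▸ Finset.mem_singleton_self i
          have hixv : i ∈ Df x v := hsub hixy
          have hDyv : Df y v = (Df x v).erase i := by
            apply Finset.ext
            intro j
            rw [Finset.mem_erase, mem_Df, mem_Df]
            rcases eq_or_ne j i with rfl | hji
            · have h1' := mem_Df.1 hixy
              have h2' := mem_Df.1 hixv
              constructor
              · intro hc'
                exfalso
                revert h1' h2' hc'
                cases x j <;> cases y j <;> cases v j <;> simp
              · rintro ⟨hc', -⟩; exact absurd rfl hc'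
            · have hxj : x j = y j := by
                by_contra hc'
                have : j ∈ Df x y := mem_Df.2 hc'
                rw [hi, Finset.mem_singleton] at this
                exact hji this
              rw [← hxj]
              exact ⟨fun hc' => ⟨hji, hc'⟩, fun hc' => hc'.2⟩
          have : (Df y v).card = 1 := by
            rw [hDyv, Finset.card_erase_of_mem hixv, h2eq]
          obtain ⟨j, hj⟩ := Finset.card_eq_one.1 this
          exact hnotadjy (adj_iff_Df.2 ⟨j, by rw [Df_comm]; exact hj⟩)

end CubeSep

namespace CubeSep
open Finset

attribute [local instance] Classical.propDecidable

lemma exists_adj_of_reachable_ne {V : Type*} {G : SimpleGraph V} {x y : V}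
    (h : G.Reachable x y) (hne : x ≠ y) : ∃ w, G.Adj x w ∧ G.Reachable w y := by
  obtain ⟨p⟩ := h
  cases p with
  | nil => exact absurd rfl hne
  | cons hadj q => exact ⟨_, hadj, ⟨q⟩⟩

lemma add_two_le_pow {d : ℕ} (hd : 2 ≤ d) : d + 2 ≤ 2 ^ d := by
  induction d with
  | zero => omega
  | succ n IH =>
    rcases Nat.lt_or_ge n 2 with h | h
    · interval_cases n
      · omega
      · norm_num
    · have := IH h
      have : 2 ^ n ≤ 2 ^ (n+1) := Nat.pow_le_pow_right (by norm_num) (by omega)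
      have h2 : (2:ℕ) ^ (n+1) = 2 * 2 ^ n := by ring
      omega

lemma adj_iff_flp {d : ℕ} {v w : Fin d → Bool} :
    (cubeGraph d).Adj v w ↔ ∃ i, w = flp i v := by
  constructor
  · intro h
    obtain ⟨i, hi⟩ := adj_iff_Df.1 h
    refine ⟨i, ?_⟩
    funext j
    rcases eq_or_ne j i with rfl | hji
    · have : v j ≠ w j := mem_Df.1 (hi ▸ Finset.mem_singleton_self j)
      rw [flp_apply_same]
      revert this; cases v j <;> cases w j <;> simp
    · have : v j = w j := by
        by_contra hc
        have := mem_Df.2 hc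
        rw [hi, Finset.mem_singleton] at this
        exact hji this
      rw [flp_apply_ne v hji, this]
  · rintro ⟨i, rfl⟩
    exact adj_flp i v

lemma flp_injective {d : ℕ} (v : Fin d → Bool) :
    Function.Injective (fun i => flp i v) := by
  intro i j h
  simp only at h
  by_contra hij
  have h1 : flp i v i = !(v i) := flp_apply_same i v
  have h2 : flp j v i = v i := flp_apply_ne v hij
  rw [h, h2] at h1
  revert h1; cases v i <;> simp

end CubeSep

open CubeSep Finset

/-- If a set `X` of exactly `d` vertices separates the `d`-cube graph
(`d ≥ 2`), then `X` is the set of all neighbours of some vertex `v`, and the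
graph induced on the complement of `X` has exactly two connected components,
one of which is the single vertex `v`. -/
theorem cube_separator_card_d (d : ℕ) (hd : 2 ≤ d)
    (X : Finset (Fin d → Bool)) (hcard : X.card = d)
    (hdisc : ¬ ((cubeGraph d).induce {x : Fin d → Bool | x ∉ X}).Connected) :
    ∃ v : Fin d → Bool, ∃ hv : v ∉ X,
      (↑X : Set (Fin d → Bool)) = (cubeGraph d).neighborSet v ∧
      Nat.card
        ((cubeGraph d).induce {x : Fin d → Bool | x ∉ X}).ConnectedComponent
        = 2 ∧
      ∀ x : {x : Fin d → Bool | x ∉ X},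
        ((cubeGraph d).induce {x : Fin d → Bool | x ∉ X}).Reachable x ⟨v, hv⟩ →
          (x : Fin d → Bool) = v := by
  classical
  set G := (cubeGraph d).induce {x : Fin d → Bool | x ∉ X} with hG
  have hcardV : Fintype.card (Fin d → Bool) = 2 ^ d := by simp
  have hpow := add_two_le_pow hd
  have hexV : ∃ w, w ∉ X := by
    by_contra hno
    push_neg at hno
    have hsub : (Finset.univ : Finset (Fin d → Bool)) ⊆ X := fun w _ => hno w
    have hle := Finset.card_le_card hsub
    rw [Finset.card_univ, hcardV, hcard] at hle
    omega
  obtain ⟨w₀, hw₀⟩ := hexV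
  have hnE : Nonempty ({x : Fin d → Bool | x ∉ X} : Set _) := ⟨⟨w₀, hw₀⟩⟩
  have hpre : ¬ G.Preconnected := by
    intro hp
    exact hdisc ((SimpleGraph.connected_iff _).2 ⟨hp, hnE⟩)
  unfold SimpleGraph.Preconnected at hpre
  push_neg at hpre
  obtain ⟨x, y, hxy⟩ := hpre
  let Cmp : ({x : Fin d → Bool | x ∉ X} : Set _) → Finset (Fin d → Bool) := fun x =>
    Finset.univ.filter (fun w => ∃ hw : w ∉ X, G.Reachable ⟨w, hw⟩ x)
  have memCmp : ∀ (x : ({x : Fin d → Bool | x ∉ X} : Set _)) (w),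
      w ∈ Cmp x ↔ ∃ hw : w ∉ X, G.Reachable ⟨w, hw⟩ x := by
    intro x w
    simp only [Cmp, Finset.mem_filter, Finset.mem_univ, true_and]
  have self_mem : ∀ x : ({x : Fin d → Bool | x ∉ X} : Set _), x.1 ∈ Cmp x := by
    intro x
    rw [memCmp]
    exact ⟨x.2, by rfl⟩
  have reach_mem : ∀ (x : ({x : Fin d → Bool | x ∉ X} : Set _)) (u), G.Reachable u x →
      u.1 ∈ Cmp x := by
    intro x u hr
    rw [memCmp]
    exact ⟨u.2, hr⟩
  have disjCmp : ∀ w, w ∈ Cmp x → w ∈ Cmp y → False := by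
    intro w h1 h2
    rw [memCmp] at h1 h2
    obtain ⟨hw, hr1⟩ := h1
    obtain ⟨hw', hr2⟩ := h2
    exact hxy (hr1.symm.trans hr2)
  -- crucial step : some connected component is a single vertex
  have key : ∃ v : ({x : Fin d → Bool | x ∉ X} : Set _),
      ∀ u, G.Reachable u v → u = v := by
    by_contra hk
    push_neg at hk
    obtain ⟨x', hx'r, hx'ne⟩ := hk x
    obtain ⟨wx, hwxadj, hwxr⟩ := exists_adj_of_reachable_ne hx'r hx'ne
    obtain ⟨y', hy'r, hy'ne⟩ := hk y
    have hx'mem : x'.1 ∈ Cmp x := reach_mem x x' hx'r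
    have hwxmem : wx.1 ∈ Cmp x := reach_mem x wx hwxr
    have hymem : y.1 ∈ Cmp y := self_mem y
    have hy'mem : y'.1 ∈ Cmp y := reach_mem y y' hy'r
    -- elements of Cmp y are outside Cmp x and non-adjacent to it
    have hnadj : ∀ z, z ∈ Cmp y → z ∉ Cmp x ∧ ∀ a ∈ Cmp x, ¬ (cubeGraph d).Adj a z := by
      intro z hz
      refine ⟨fun hc => disjCmp z hc hz, ?_⟩
      intro a ha hadj
      rw [memCmp] at ha
      obtain ⟨haX, har⟩ := ha
      have hzX : z ∉ X := by
        rw [memCmp] at hz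
        exact hz.1
      have hadj' : G.Adj ⟨z, hzX⟩ ⟨a, haX⟩ := hadj.symm
      have : z ∈ Cmp x := reach_mem x ⟨z, hzX⟩ (hadj'.reachable.trans har)
      exact disjCmp z this hz
    have hbdX : bd d (Cmp x) ⊆ X := by
      intro w hw
      rw [mem_bd] at hw
      obtain ⟨hwC, a, ha, hadj⟩ := hw
      by_contra hwX
      rw [memCmp] at ha
      obtain ⟨haX, har⟩ := ha
      have hadj' : G.Adj ⟨w, hwX⟩ ⟨a, haX⟩ := hadj.symm
      exact hwC (reach_mem x ⟨w, hwX⟩ (hadj'.reachable.trans har))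
    have hbdle : (bd d (Cmp x)).card ≤ d :=
      le_trans (Finset.card_le_card hbdX) (le_of_eq hcard)
    have hz12 : y.1 ≠ y'.1 := fun h => hy'ne (Subtype.ext h.symm)
    rcases Nat.lt_or_ge d 3 with h3 | h3
    · -- d = 2 : a counting contradiction
      have hd2 : d = 2 := by omega
      have hsubx : Cmp x ⊆ Xᶜ := by
        intro w hw
        rw [Finset.mem_compl]
        exact ((memCmp x w).1 hw).1
      have hsuby : Cmp y ⊆ Xᶜ := by
        intro w hw
        rw [Finset.mem_compl]
        exact ((memCmp y w).1 hw).1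
      have hdisj : Disjoint (Cmp x) (Cmp y) := by
        rw [Finset.disjoint_left]
        exact fun w h1 h2 => disjCmp w h1 h2
      have hcx : 2 ≤ (Cmp x).card := by
        have hpair : ({x.1, x'.1} : Finset (Fin d → Bool)) ⊆ Cmp x := by
          intro w hw
          rw [Finset.mem_insert, Finset.mem_singleton] at hw
          rcases hw with rfl | rfl
          · exact self_mem x
          · exact hx'mem
        have h1 : x.1 ≠ x'.1 := fun h => hx'ne (Subtype.ext h.symm)
        have := Finset.card_le_card hpair
        rw [Finset.card_insert_of_notMem (by rw [Finset.mem_singleton]; exact h1), Finset.card_singleton] at this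
        omega
      have hcy : 2 ≤ (Cmp y).card := by
        have hpair : ({y.1, y'.1} : Finset (Fin d → Bool)) ⊆ Cmp y := by
          intro w hw
          rw [Finset.mem_insert, Finset.mem_singleton] at hw
          rcases hw with rfl | rfl
          · exact self_mem y
          · exact hy'mem
        have := Finset.card_le_card hpair
        rw [Finset.card_insert_of_notMem (by rw [Finset.mem_singleton]; exact hz12), Finset.card_singleton] at this
        omega
      have hunion := Finset.card_le_card (Finset.union_subset hsubx hsuby)
      rw [Finset.card_union_of_disjoint hdisj] at hunion
      have hcompl : (Xᶜ : Finset (Fin d → Bool)).card = 2 ^ d - d := by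
        rw [Finset.card_compl, hcard, hcardV]
      rw [hcompl] at hunion
      have hp4 : (2:ℕ) ^ d = 4 := by rw [hd2]; norm_num
      omega
    · -- d ≥ 3 : the boundary of Cmp x is too big
      obtain ⟨e, rfl⟩ : ∃ e, d = e + 1 := ⟨d - 1, by omega⟩
      have h2e : 2 ≤ e := by omega
      have hamb : (cubeGraph (e+1)).Adj x'.1 wx.1 := hwxadj
      have hbig := bd_card2 e h2e (Cmp x) x'.1 wx.1 hx'mem hwxmem hamb
        y.1 y'.1 hz12 (hnadj y.1 hymem).1 (hnadj y.1 hymem).2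
        (hnadj y'.1 hy'mem).1 (hnadj y'.1 hy'mem).2
      omega
  obtain ⟨v, hviso⟩ := key
  have hNX : ∀ w, (cubeGraph d).Adj v.1 w → w ∈ X := by
    intro w hadj
    by_contra hw
    have hadj' : G.Adj ⟨w, hw⟩ v := hadj.symm
    have heq := hviso ⟨w, hw⟩ hadj'.reachable
    have hwv : w = v.1 := congrArg Subtype.val heq
    rw [hwv] at hadj
    exact (cubeGraph d).loopless.irrefl v.1 hadj
  have hF : Finset.univ.image (fun i => flp i v.1) ⊆ X := by
    intro w hw
    rw [Finset.mem_image] at hw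
    obtain ⟨i, -, rfl⟩ := hw
    exact hNX _ (adj_flp i v.1)
  have hFcard : (Finset.univ.image (fun i => flp i v.1)).card = d := by
    rw [Finset.card_image_of_injective _ (flp_injective v.1), Finset.card_univ,
      Fintype.card_fin]
  have hXeq : Finset.univ.image (fun i => flp i v.1) = X :=
    Finset.eq_of_subset_of_card_le hF (by omega)
  have hN : ∀ w, w ∈ X ↔ (cubeGraph d).Adj v.1 w := by
    intro w
    constructor
    · intro hw
      rw [← hXeq, Finset.mem_image] at hw
      obtain ⟨i, -, rfl⟩ := hw
      exact adj_flp i v.1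
    · exact hNX w
  refine ⟨v.1, v.2, ?_, ?_, ?_⟩
  · ext w
    rw [Finset.mem_coe, SimpleGraph.mem_neighborSet]
    exact hN w
  · obtain ⟨u, hu, huv⟩ : ∃ u, u ∉ X ∧ u ≠ v.1 := by
      by_contra hno
      push_neg at hno
      have hsub : (Finset.univ : Finset (Fin d → Bool)) ⊆ insert v.1 X := by
        intro u _
        by_cases h : u ∈ X
        · exact Finset.mem_insert_of_mem h
        · rw [hno u h]
          exact Finset.mem_insert_self _ _
      have hle := Finset.card_le_card hsub
      have hins := Finset.card_insert_le v.1 X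
      rw [Finset.card_univ, hcardV] at hle
      omega
    have hreachu : ∀ (w : Fin d → Bool) (hw : w ∉ X), w ≠ v.1 →
        G.Reachable ⟨w, hw⟩ ⟨u, hu⟩ := by
      intro w hw hwv
      refine reach_in_compl d X v.1 hN d w u hw hu hwv huv ?_
      have h1 := Finset.card_le_univ (Df w u)
      simpa using h1
    rw [Nat.card_eq_two_iff]
    refine ⟨G.connectedComponentMk v, G.connectedComponentMk ⟨u, hu⟩, ?_, ?_⟩
    · intro h
      have hr := SimpleGraph.ConnectedComponent.eq.1 h
      have heq := hviso ⟨u, hu⟩ hr.symm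
      exact huv (congrArg Subtype.val heq)
    · rw [Set.eq_univ_iff_forall]
      intro c
      refine SimpleGraph.ConnectedComponent.ind ?_ c
      intro w
      simp only [Set.mem_insert_iff, Set.mem_singleton_iff]
      by_cases hwv : w.1 = v.1
      · left
        rw [show w = v from Subtype.ext hwv]
      · right
        exact SimpleGraph.ConnectedComponent.sound (hreachu w.1 w.2 hwv)
  · intro z hz
    exact congrArg Subtype.val (hviso z hz)
end

section
/- Let d ≥ 2 and let X be a set of exactly d vertices of the d-cube graph Q_d such that the induced subgraph of Q_d on V(Q_d) \ X is disconnected. Then X is an independent set: no two vertices of X are adjacent in Q_d. -/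
namespace CubeSep

open Finset

/-- Reachability in the cube avoiding a set `S` of vertices. -/
def Rel (d : ℕ) (S : Finset (Fin d → Bool)) : (Fin d → Bool) → (Fin d → Bool) → Prop :=
  Relation.ReflTransGen (fun a b => (cubeGraph d).Adj a b ∧ a ∉ S ∧ b ∉ S)

lemma rel_symm {d : ℕ} {S : Finset (Fin d → Bool)} {u v : Fin d → Bool}
    (h : Rel d S u v) : Rel d S v u := by
  induction h with
  | refl => exact Relation.ReflTransGen.refl
  | tail _ h2 ih =>
      exact Relation.ReflTransGen.trans
        (Relation.ReflTransGen.single ⟨h2.1.symm, h2.2.2, h2.2.1⟩) ih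

lemma adj_update {d : ℕ} {u : Fin d → Bool} {i : Fin d} {c : Bool} (h : u i ≠ c) :
    (cubeGraph d).Adj u (Function.update u i c) := by
  refine ⟨i, by simpa using h, fun j hj => by simp [Function.update_of_ne hj]⟩

lemma adj_insertNth {m : ℕ} (i : Fin (m+1)) (c : Bool) {x y : Fin m → Bool}
    (h : (cubeGraph m).Adj x y) :
    (cubeGraph (m+1)).Adj (i.insertNth c x) (i.insertNth c y) := by
  obtain ⟨j, hj, hall⟩ := h
  refine ⟨i.succAbove j, by simpa [Fin.insertNth_apply_succAbove] using hj, ?_⟩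
  intro k hk
  rcases eq_or_ne k i with rfl | hki
  · simp [Fin.insertNth_apply_same]
  · obtain ⟨j', rfl⟩ := Fin.exists_succAbove_eq hki
    have hj' : j' ≠ j := fun h' => hk (by rw [h'])
    simp [Fin.insertNth_apply_succAbove, hall j' hj']

lemma rel_insertNth {m : ℕ} (S : Finset (Fin (m+1) → Bool)) (i : Fin (m+1)) (c : Bool)
    (S' : Finset (Fin m → Bool)) (hS' : ∀ w, w ∈ S' ↔ i.insertNth c w ∈ S)
    {x y : Fin m → Bool} (h : Rel m S' x y) :
    Rel (m+1) S (i.insertNth c x) (i.insertNth c y) := by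
  induction h with
  | refl => exact Relation.ReflTransGen.refl
  | tail _ h2 ih =>
      exact ih.tail ⟨adj_insertNth i c h2.1,
        fun hm => h2.2.1 ((hS' _).mpr hm), fun hm => h2.2.2 ((hS' _).mpr hm)⟩

/-- Preimage of `X` in the subcube at coordinate `i` with value `c`. -/
def half {m : ℕ} (X : Finset (Fin (m+1) → Bool)) (i : Fin (m+1)) (c : Bool) :
    Finset (Fin m → Bool) :=
  Finset.univ.filter fun w => i.insertNth c w ∈ X

lemma mem_half {m : ℕ} {X : Finset (Fin (m+1) → Bool)} {i : Fin (m+1)} {c : Bool}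
    {w : Fin m → Bool} : w ∈ half X i c ↔ i.insertNth c w ∈ X := by
  simp [half]

lemma half_card_le {m : ℕ} (X : Finset (Fin (m+1) → Bool)) (i : Fin (m+1)) (c : Bool) :
    (half X i c).card ≤ (X.filter fun z => z i = c).card := by
  apply Finset.card_le_card_of_injOn (fun w => (i.insertNth c w : Fin (m+1) → Bool))
  · intro w hw
    exact Finset.mem_filter.mpr ⟨mem_half.mp hw, @Fin.insertNth_apply_same m (fun _ => Bool) i c w⟩
  · intro a _ b _ hab
    have := congrArg i.removeNth hab
    simpa [Fin.removeNth_insertNth] using this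

lemma insertNth_removeNth_of_eq {m : ℕ} {i : Fin (m+1)} {c : Bool}
    {a : Fin (m+1) → Bool} (h : a i = c) : i.insertNth c (i.removeNth a) = a := by
  rw [← h]; exact Fin.insertNth_self_removeNth i a

/-- Connecting two vertices lying in the same subcube, avoiding `X`, given a
connectivity oracle for dimension `m`. -/
lemma half_connect {m : ℕ} {X : Finset (Fin (m+1) → Bool)} {i : Fin (m+1)} {c : Bool}
    (ihm : ∀ S : Finset (Fin m → Bool), S.card < m ∨ S.card ≤ 1 →
      ∀ a b, a ∉ S → b ∉ S → Rel m S a b)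
    (hcond : (half X i c).card < m ∨ (half X i c).card ≤ 1)
    {u z : Fin (m+1) → Bool} (hu : u ∉ X) (hz : z ∉ X) (huc : u i = c) (hzc : z i = c) :
    Rel (m+1) X u z := by
  have h1 : i.removeNth u ∉ half X i c := by
    rw [mem_half, insertNth_removeNth_of_eq huc]; exact hu
  have h2 : i.removeNth z ∉ half X i c := by
    rw [mem_half, insertNth_removeNth_of_eq hzc]; exact hz
  have h3 := rel_insertNth X i c (half X i c) (fun w => mem_half)
    (ihm _ hcond _ _ h1 h2)
  rwa [insertNth_removeNth_of_eq huc, insertNth_removeNth_of_eq hzc] at h3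

lemma cross_rel {m : ℕ} {X : Finset (Fin (m+1) → Bool)} {i : Fin (m+1)} {w : Fin m → Bool}
    (hw : ∀ c, i.insertNth c w ∉ X) (c c' : Bool) :
    Rel (m+1) X (i.insertNth c w) (i.insertNth c' w) := by
  rcases eq_or_ne c c' with rfl | h
  · exact Relation.ReflTransGen.refl
  · refine Relation.ReflTransGen.single ⟨⟨i, ?_, ?_⟩, hw c, hw c'⟩
    · simpa [Fin.insertNth_apply_same] using h
    · intro j hj
      obtain ⟨j', rfl⟩ := Fin.exists_succAbove_eq hj
      simp [Fin.insertNth_apply_succAbove]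

/-- Key connectivity lemma: removing fewer than `n` vertices (or at most one
vertex) from the `n`-cube leaves it connected. -/
lemma cube_del (n : ℕ) : ∀ S : Finset (Fin n → Bool), S.card < n ∨ S.card ≤ 1 →
    ∀ u v, u ∉ S → v ∉ S → Rel n S u v := by
  induction n with
  | zero =>
      intro S _ u v _ _
      have : u = v := funext fun j => j.elim0
      rw [this]
      exact Relation.ReflTransGen.refl
  | succ m ih =>
      intro S hS u v hu hv
      by_cases hsplit : ∃ i : Fin (m+1), ∃ s ∈ S, ∃ t ∈ S, s i ≠ t i
      · obtain ⟨i, s, hs, t, ht, hst⟩ := hsplit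
        have hScard : S.card ≤ m := by
          rcases hS with h | h
          · omega
          · exact absurd (Finset.card_le_one.mp h s hs t ht)
              (fun he => hst (by rw [he]))
        have hlt : ∀ c : Bool, (S.filter fun z => z i = c).card < S.card := by
          intro c
          apply Finset.card_lt_card
          rw [Finset.filter_ssubset]
          rcases eq_or_ne (s i) c with h | h
          · exact ⟨t, ht, fun h2 => hst (h.trans h2.symm)⟩
          · exact ⟨s, hs, h⟩
        have hhalf : ∀ c : Bool, (half S i c).card < m := fun c =>
          lt_of_le_of_lt (half_card_le S i c) (lt_of_lt_of_le (hlt c) hScard)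
        have himg : (S.image i.removeNth).card < Fintype.card (Fin m → Bool) := by
          have h1 : (S.image i.removeNth).card ≤ S.card := Finset.card_image_le
          have h2 : Fintype.card (Fin m → Bool) = 2 ^ m := by
            simp [Fintype.card_fun]
          have := Nat.lt_two_pow_self (n := m)
          omega
        obtain ⟨w, hw⟩ : ∃ w, w ∉ S.image i.removeNth := by
          by_contra hcon
          push_neg at hcon
          have heq : S.image i.removeNth = Finset.univ := Finset.eq_univ_of_forall hcon
          rw [heq, Finset.card_univ] at himg
          omega
        have hwfree : ∀ c : Bool, i.insertNth c w ∉ S := by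
          intro c hc
          exact hw (Finset.mem_image.mpr ⟨_, hc, @Fin.removeNth_insertNth m (fun _ => Bool) i c w⟩)
        have key : ∀ a, a ∉ S → Rel (m+1) S a (i.insertNth (a i) w) :=
          fun a ha => half_connect ih (Or.inl (hhalf (a i))) ha (hwfree (a i)) rfl
            (@Fin.insertNth_apply_same m (fun _ => Bool) i (a i) w)
        exact ((key u hu).trans (cross_rel hwfree (u i) (v i))).trans
          (rel_symm (key v hv))
      · push_neg at hsplit
        obtain ⟨c, hc⟩ : ∃ c : Bool, ∀ s ∈ S, s 0 ≠ c := by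
          rcases S.eq_empty_or_nonempty with rfl | ⟨s, hs⟩
          · exact ⟨true, by simp⟩
          · refine ⟨!(s 0), fun t ht h => ?_⟩
            have he : t 0 = s 0 := hsplit 0 t ht s hs
            rw [he] at h
            simp at h
        have push : ∀ a, a ∉ S → ∃ a', Rel (m+1) S a a' ∧ a' 0 = c := by
          intro a ha
          rcases eq_or_ne (a 0) c with h | h
          · exact ⟨a, Relation.ReflTransGen.refl, h⟩
          · refine ⟨Function.update a 0 c,
              Relation.ReflTransGen.single ⟨adj_update h, ha, ?_⟩, by simp⟩
            intro hm
            exact hc _ hm (by simp)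
        obtain ⟨u', hru, hu0⟩ := push u hu
        obtain ⟨v', hrv, hv0⟩ := push v hv
        have hu' : u' ∉ S := fun h => hc _ h hu0
        have hv' : v' ∉ S := fun h => hc _ h hv0
        have hhalf : (half S 0 c).card ≤ 1 := by
          have heq : half S 0 c = ∅ := by
            apply Finset.eq_empty_of_forall_notMem
            intro w hw
            exact hc _ (mem_half.mp hw) (@Fin.insertNth_apply_same m (fun _ => Bool) 0 c w)
          simp [heq]
        have hmid : Rel (m+1) S u' v' :=
          half_connect ih (Or.inr hhalf) hu' hv' hu0 hv0
        exact (hru.trans hmid).trans (rel_symm hrv)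

/-- The case where one side of the separating edge is alone in its subcube. -/
lemma case_one {m : ℕ} (X : Finset (Fin (m+1) → Bool)) {x y : Fin (m+1) → Bool}
    (hx : x ∈ X) (i : Fin (m+1)) (hi : x i ≠ y i) (hoth : ∀ j, j ≠ i → x j = y j)
    (h1 : X.filter (fun z => z i = y i) = {y}) :
    ∀ u v, u ∉ X → v ∉ X → Rel (m+1) X u v := by
  intro u v hu hv
  have push : ∀ a, a ∉ X → ∃ a', Rel (m+1) X a a' ∧ a' i = y i ∧ a' ∉ X := by
    intro a ha
    rcases eq_or_ne (a i) (y i) with h | h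
    · exact ⟨a, Relation.ReflTransGen.refl, h, ha⟩
    · have hne : Function.update a i (y i) ∉ X := by
        intro hmem
        have hmem2 : Function.update a i (y i) ∈ X.filter (fun z => z i = y i) :=
          Finset.mem_filter.mpr ⟨hmem, by simp⟩
        rw [h1, Finset.mem_singleton] at hmem2
        have hai : a i = x i := by
          revert h hi
          rcases Bool.eq_false_or_eq_true (a i) with h1 | h1 <;>
            rcases Bool.eq_false_or_eq_true (x i) with h2 | h2 <;>
              rcases Bool.eq_false_or_eq_true (y i) with h3 | h3 <;> simp_all
        have hax : a = x := by
          funext j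
          rcases eq_or_ne j i with rfl | hj
          · exact hai
          · have hj2 := congrFun hmem2 j
            rw [Function.update_of_ne hj] at hj2
            rw [hj2]
            exact (hoth j hj).symm
        exact ha (hax ▸ hx)
      exact ⟨_, Relation.ReflTransGen.single ⟨adj_update h, ha, hne⟩, by simp, hne⟩
  obtain ⟨u', hru, hu0, hu'⟩ := push u hu
  obtain ⟨v', hrv, hv0, hv'⟩ := push v hv
  have hhalf : (half X i (y i)).card ≤ 1 := by
    have hl := half_card_le X i (y i)
    rw [h1] at hl
    simpa using hl
  have hmid : Rel (m+1) X u' v' :=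
    half_connect (cube_del m) (Or.inr hhalf) hu' hv' hu0 hv0
  exact (hru.trans hmid).trans (rel_symm hrv)

/-- The case where both subcubes contain at least two vertices of `X`. -/
lemma case_two {m : ℕ} (X : Finset (Fin (m+1) → Bool)) (hcard : X.card = m + 1)
    {x y : Fin (m+1) → Bool} (hx : x ∈ X) (hy : y ∈ X)
    (i : Fin (m+1)) (hi : x i ≠ y i) (hoth : ∀ j, j ≠ i → x j = y j)
    (hfc : ∀ c : Bool, (X.filter fun z => z i = c).card < m) :
    ∀ u v, u ∉ X → v ∉ X → Rel (m+1) X u v := by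
  intro u v hu hv
  have hhalf : ∀ c : Bool, (half X i c).card < m := fun c =>
    lt_of_le_of_lt (half_card_le X i c) (hfc c)
  have hrxy : i.removeNth x = i.removeNth y :=
    funext fun j => hoth _ (Fin.succAbove_ne i j)
  have himgsub : X.image i.removeNth = (X.erase y).image i.removeNth := by
    apply Finset.Subset.antisymm
    · intro w hw
      rw [Finset.mem_image] at hw ⊢
      obtain ⟨z, hz, rfl⟩ := hw
      rcases eq_or_ne z y with rfl | hzy
      · exact ⟨x, Finset.mem_erase.mpr ⟨fun h => hi (by rw [h]), hx⟩, hrxy.symm ▸ hrxy⟩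
      · exact ⟨z, Finset.mem_erase.mpr ⟨hzy, hz⟩, rfl⟩
    · exact Finset.image_subset_image (Finset.erase_subset _ _)
  have himg : (X.image i.removeNth).card < Fintype.card (Fin m → Bool) := by
    have h1 : (X.image i.removeNth).card ≤ (X.erase y).card := by
      rw [himgsub]; exact Finset.card_image_le
    have h2 : (X.erase y).card = m := by
      rw [Finset.card_erase_of_mem hy, hcard]
      omega
    have h3 : Fintype.card (Fin m → Bool) = 2 ^ m := by
      simp [Fintype.card_fun]
    have := Nat.lt_two_pow_self (n := m)
    omega
  obtain ⟨w, hw⟩ : ∃ w, w ∉ X.image i.removeNth := by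
    by_contra hcon
    push_neg at hcon
    have heq : X.image i.removeNth = Finset.univ := Finset.eq_univ_of_forall hcon
    rw [heq, Finset.card_univ] at himg
    omega
  have hwfree : ∀ c : Bool, i.insertNth c w ∉ X := by
    intro c hc
    exact hw (Finset.mem_image.mpr ⟨_, hc, @Fin.removeNth_insertNth m (fun _ => Bool) i c w⟩)
  have key : ∀ a, a ∉ X → Rel (m+1) X a (i.insertNth (a i) w) :=
    fun a ha => half_connect (cube_del m) (Or.inl (hhalf (a i))) ha (hwfree (a i)) rfl
      (@Fin.insertNth_apply_same m (fun _ => Bool) i (a i) w)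
  exact ((key u hu).trans (cross_rel hwfree (u i) (v i))).trans (rel_symm (key v hv))

lemma rel_reachable {d : ℕ} {S : Finset (Fin d → Bool)} {u v : Fin d → Bool}
    (hu : u ∈ {x : Fin d → Bool | x ∉ S}) (h : Rel d S u v) :
    ∀ hv : v ∈ {x : Fin d → Bool | x ∉ S},
      ((cubeGraph d).induce {x : Fin d → Bool | x ∉ S}).Reachable ⟨u, hu⟩ ⟨v, hv⟩ := by
  induction h with
  | refl => intro hv; exact SimpleGraph.Reachable.refl _
  | tail _ h2 ih =>
      intro hv
      refine (ih h2.2.1).trans (SimpleGraph.Adj.reachable ?_)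
      exact h2.1

end CubeSep

/-- A separator of cardinality `d` in the `d`-cube graph (`d ≥ 2`) is an
independent set: no two of its vertices are adjacent. -/
theorem cube_separator_independent (d : ℕ) (hd : 2 ≤ d)
    (X : Finset (Fin d → Bool)) (hcard : X.card = d)
    (hdisc : ¬ ((cubeGraph d).induce {x : Fin d → Bool | x ∉ X}).Connected) :
    ∀ x ∈ X, ∀ y ∈ X, ¬ (cubeGraph d).Adj x y := by
  intro x hx y hy hadj
  obtain ⟨i, hi, hoth⟩ := hadj
  apply hdisc
  obtain ⟨m, rfl⟩ : ∃ m, d = m + 1 := ⟨d - 1, by omega⟩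
  have hm : 1 ≤ m := by omega
  have hfilteq : X.filter (fun z => ¬ z i = x i) = X.filter (fun z => z i = y i) := by
    apply Finset.filter_congr
    intro z _
    constructor
    · intro h
      revert h hi
      rcases Bool.eq_false_or_eq_true (z i) with h1 | h1 <;>
        rcases Bool.eq_false_or_eq_true (x i) with h2 | h2 <;>
          rcases Bool.eq_false_or_eq_true (y i) with h3 | h3 <;> simp_all
    · intro h h2
      exact hi (h2.symm.trans h)
  have hab : (X.filter fun z => z i = x i).card + (X.filter fun z => z i = y i).card
      = m + 1 := by
    rw [← hfilteq, Finset.card_filter_add_card_filter_not, hcard]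
  have ha1 : 1 ≤ (X.filter fun z => z i = x i).card :=
    Finset.card_pos.mpr ⟨x, Finset.mem_filter.mpr ⟨hx, rfl⟩⟩
  have hb1 : 1 ≤ (X.filter fun z => z i = y i).card :=
    Finset.card_pos.mpr ⟨y, Finset.mem_filter.mpr ⟨hy, rfl⟩⟩
  have key : ∀ u v, u ∉ X → v ∉ X → CubeSep.Rel (m+1) X u v := by
    rcases eq_or_lt_of_le hb1 with hb | hb2
    · obtain ⟨a0, he⟩ := Finset.card_eq_one.mp hb.symm
      have hy0 : y ∈ X.filter (fun z => z i = y i) := Finset.mem_filter.mpr ⟨hy, rfl⟩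
      rw [he, Finset.mem_singleton] at hy0
      rw [← hy0] at he
      exact CubeSep.case_one X hx i hi hoth he
    rcases eq_or_lt_of_le ha1 with ha | ha2
    · obtain ⟨a0, he⟩ := Finset.card_eq_one.mp ha.symm
      have hx0 : x ∈ X.filter (fun z => z i = x i) := Finset.mem_filter.mpr ⟨hx, rfl⟩
      rw [he, Finset.mem_singleton] at hx0
      rw [← hx0] at he
      exact CubeSep.case_one X hy i (Ne.symm hi) (fun j hj => (hoth j hj).symm) he
    · apply CubeSep.case_two X hcard hx hy i hi hoth
      intro c
      have hcx : c = x i ∨ c = y i := by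
        revert hi
        rcases Bool.eq_false_or_eq_true c with h1 | h1 <;>
          rcases Bool.eq_false_or_eq_true (x i) with h2 | h2 <;>
            rcases Bool.eq_false_or_eq_true (y i) with h3 | h3 <;> simp_all
      have harith : ∀ a b : ℕ, a + b = m + 1 → 2 ≤ b → a < m := by
        intro a b hab2 h2b
        clear * - hab2 h2b
        omega
      rcases hcx with rfl | rfl
      · exact harith _ _ hab hb2
      · exact harith _ _ ((Nat.add_comm _ _).trans hab) ha2
  obtain ⟨z, hz⟩ : ∃ z, z ∉ X := by
    by_contra hcon
    push_neg at hcon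
    have huniv : X = Finset.univ := Finset.eq_univ_of_forall hcon
    have h3 : Fintype.card (Fin (m+1) → Bool) = 2 ^ (m+1) := by
      simp [Fintype.card_fun]
    have hlt2 := Nat.lt_two_pow_self (n := m+1)
    rw [huniv, Finset.card_univ, h3] at hcard
    rw [hcard] at hlt2
    exact Nat.lt_irrefl _ hlt2
  haveI : Nonempty {x : Fin (m+1) → Bool | x ∉ X} := ⟨⟨z, hz⟩⟩
  refine ⟨?_⟩
  rintro ⟨u, hu⟩ ⟨v, hv⟩
  exact CubeSep.rel_reachable hu (key u v hu hv) hv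
end

section
/- Let s_1, s_2, t_1, t_2 be four distinct vertices of the 3-cube graph Q_3 that all agree in some fixed coordinate c (so that all four lie in a common 2-face of the 3-cube), and suppose that s_1 is not adjacent to t_1 and s_2 is not adjacent to t_2 in Q_3 (so the four vertices appear in the cyclic order s_1, s_2, t_1, t_2 on that 2-face). Then there do not exist two vertex-disjoint paths in Q_3, one joining s_1 to t_1 and one joining s_2 to t_2. In particular, the 3-cube graph Q_3 is not 2-linked. -/
lemma tri3 : ∀ c i j k : Fin 3, c ≠ i → c ≠ j → i ≠ j → (k = c ∨ k = i ∨ k = j) := by decide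

lemma third3 : ∀ c i : Fin 3, c ≠ i → ∃ j, j ≠ c ∧ j ≠ i := by decide

lemma bool_ne {x y : Bool} (h : x ≠ y) : x = !y := by cases x <;> cases y <;> simp_all

lemma bool_self_ne_not (b : Bool) : b ≠ !b := by cases b <;> simp

/-- Neighbourhood lemma: if `x` has three neighbours `uc, ui, uj` obtained by flipping
coordinates `c, i, j` respectively, then every neighbour of `x` is one of them. -/
lemma cube_nbhd {c i j : Fin 3} (hci : c ≠ i) (hcj : c ≠ j) (hij : i ≠ j)
    {x uc ui uj v : Fin 3 → Bool}
    (h1 : uc c = !x c) (h2 : uc i = x i) (h3 : uc j = x j)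
    (h4 : ui c = x c) (h5 : ui i = !x i) (h6 : ui j = x j)
    (h7 : uj c = x c) (h8 : uj i = x i) (h9 : uj j = !x j)
    (hadj : (cubeGraph 3).Adj x v) : v = uc ∨ v = ui ∨ v = uj := by
  obtain ⟨k, hk, hall⟩ := hadj
  rcases tri3 c i j k hci hcj hij with rfl | rfl | rfl
  · left
    funext m
    rcases tri3 k i j m hci hcj hij with rfl | rfl | rfl
    · rw [h1, ← bool_ne (Ne.symm hk)]
    · rw [h2, ← hall m (Ne.symm hci)]
    · rw [h3, ← hall m (Ne.symm hcj)]
  · right; left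
    funext m
    rcases tri3 c k j m hci hcj hij with rfl | rfl | rfl
    · rw [h4, ← hall m hci]
    · rw [h5, ← bool_ne (Ne.symm hk)]
    · rw [h6, ← hall m (Ne.symm hij)]
  · right; right
    funext m
    rcases tri3 c i k m hci hcj hij with rfl | rfl | rfl
    · rw [h7, ← hall m hcj]
    · rw [h8, ← hall m hij]
    · rw [h9, ← bool_ne (Ne.symm hk)]

lemma second_vertex {u v : Fin 3 → Bool} (q : (cubeGraph 3).Walk u v) (hne : u ≠ v) :
    ∃ w, (cubeGraph 3).Adj u w ∧ w ∈ q.support := by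
  cases q with
  | nil => exact absurd rfl hne
  | cons h q' =>
    exact ⟨_, h, by
      rw [SimpleGraph.Walk.support_cons]
      exact List.mem_cons_of_mem _ q'.start_mem_support⟩

/-- If four distinct vertices `s₁, s₂, t₁, t₂` of the 3-cube all lie in a
common 2-face (they agree in some coordinate `c`) and appear there in the
cyclic order `s₁, s₂, t₁, t₂` (equivalently, `s₁` is not adjacent to `t₁` and
`s₂` is not adjacent to `t₂`), then there are no two vertex-disjoint paths
joining `s₁` to `t₁` and `s₂` to `t₂` respectively. In particular the 3-cube
graph is not 2-linked. -/
theorem cube3_not_linked (s₁ s₂ t₁ t₂ : Fin 3 → Bool)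
    (hnodup : [s₁, s₂, t₁, t₂].Nodup)
    (c : Fin 3) (hface : s₁ c = s₂ c ∧ s₂ c = t₁ c ∧ t₁ c = t₂ c)
    (h₁ : ¬ (cubeGraph 3).Adj s₁ t₁) (h₂ : ¬ (cubeGraph 3).Adj s₂ t₂) :
    (¬ ∃ (p : (cubeGraph 3).Walk s₁ t₁) (q : (cubeGraph 3).Walk s₂ t₂),
        p.IsPath ∧ q.IsPath ∧ ∀ v ∈ p.support, v ∉ q.support) ∧
      ¬ IsKLinked (cubeGraph 3) 2 := by
  simp only [List.nodup_cons, List.mem_cons, List.mem_singleton, List.not_mem_nil, or_false,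
    not_or, List.nodup_nil, and_true] at hnodup
  obtain ⟨⟨h12, h13, h14⟩, ⟨h23, h24⟩, h34, -⟩ := hnodup
  obtain ⟨hf1, hf2, hf3⟩ := hface
  -- two non-adjacent vertices in the same face differ in all non-`c` coordinates
  have L1 : ∀ x y : Fin 3 → Bool, x c = y c → x ≠ y → ¬(cubeGraph 3).Adj x y →
      ∀ k, k ≠ c → x k ≠ y k := by
    intro x y hc hne hnadj k hkc hxy
    apply hnadj
    have hne' : ∃ m, x m ≠ y m := by
      by_contra h
      push_neg at h
      exact hne (funext h)
    obtain ⟨m, hm⟩ := hne'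
    have hmc : m ≠ c := fun h => hm (h ▸ hc)
    have hmk : m ≠ k := fun h => hm (h ▸ hxy)
    exact ⟨m, hm, fun l hl => by
      rcases tri3 c k m l (Ne.symm hkc) (Ne.symm hmc) (Ne.symm hmk) with rfl | rfl | rfl
      · exact hc
      · exact hxy
      · exact absurd rfl hl⟩
  have Ht1 := L1 s₁ t₁ (hf1.trans hf2) h13 h₁
  have Ht2 := L1 s₂ t₂ (hf2.trans hf3) h24 h₂
  -- the coordinate where s₁ and s₂ differ
  have hne12 : ∃ i, s₁ i ≠ s₂ i := by
    by_contra h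
    push_neg at h
    exact h12 (funext h)
  obtain ⟨i, hi⟩ := hne12
  have hic : i ≠ c := fun h => hi (h ▸ hf1)
  obtain ⟨j, hjc, hji⟩ := third3 c i (Ne.symm hic)
  have hci : c ≠ i := Ne.symm hic
  have hcj : c ≠ j := Ne.symm hjc
  have hij : i ≠ j := Ne.symm hji
  have F3 : s₂ j = s₁ j := by
    by_contra h
    apply h23
    funext m
    rcases tri3 c i j m hci hcj hij with rfl | rfl | rfl
    · exact hf2
    · rw [bool_ne (Ne.symm hi), bool_ne (Ne.symm (Ht1 m hic))]
    · rw [bool_ne h, bool_ne (Ne.symm (Ht1 m hjc))]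
  have Fs2c : s₂ c = s₁ c := hf1.symm
  have Fs2i : s₂ i = !s₁ i := bool_ne (Ne.symm hi)
  have Ft1c : t₁ c = s₁ c := (hf1.trans hf2).symm
  have Ft1i : t₁ i = !s₁ i := bool_ne (Ne.symm (Ht1 i hic))
  have Ft1j : t₁ j = !s₁ j := bool_ne (Ne.symm (Ht1 j hjc))
  have Ft2c : t₂ c = s₁ c := (hf1.trans (hf2.trans hf3)).symm
  have Ft2i : t₂ i = s₁ i := by rw [bool_ne (Ne.symm (Ht2 i hic)), Fs2i, Bool.not_not]
  have Ft2j : t₂ j = !s₁ j := by rw [bool_ne (Ne.symm (Ht2 j hjc)), F3]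
  -- the "prime" map to the opposite face
  set pr : (Fin 3 → Bool) → (Fin 3 → Bool) := fun v k => if k = c then !(v c) else v k with hpr
  have pr_c : ∀ v, pr v c = !(v c) := fun v => if_pos rfl
  have pr_i : ∀ v, pr v i = v i := fun v => if_neg hic
  have pr_j : ∀ v, pr v j = v j := fun v => if_neg hjc
  -- neighbourhoods
  have N1 : ∀ v, (cubeGraph 3).Adj s₁ v → v = pr s₁ ∨ v = s₂ ∨ v = t₂ :=
    fun v hv => cube_nbhd hci hcj hij (pr_c s₁) (pr_i s₁) (pr_j s₁)
      Fs2c Fs2i F3 Ft2c Ft2i Ft2j hv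
  have N2 : ∀ v, (cubeGraph 3).Adj s₂ v → v = pr s₂ ∨ v = s₁ ∨ v = t₁ :=
    fun v hv => cube_nbhd hci hcj hij (pr_c s₂) (pr_i s₂) (pr_j s₂)
      hf1 (by rw [Fs2i, Bool.not_not]) F3.symm
      (Ft1c.trans hf1) (by rw [Ft1i, Fs2i]) (by rw [Ft1j, F3]) hv
  have N3 : ∀ v, (cubeGraph 3).Adj t₂ v → v = pr t₂ ∨ v = t₁ ∨ v = s₁ :=
    fun v hv => cube_nbhd hci hcj hij (pr_c t₂) (pr_i t₂) (pr_j t₂)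
      hf3 (by rw [Ft1i, Ft2i]) (Ft1j.trans Ft2j.symm)
      Ft2c.symm Ft2i.symm (by rw [Ft2j, Bool.not_not]) hv
  have N4 : ∀ v, (cubeGraph 3).Adj (pr s₁) v → v = s₁ ∨ v = pr s₂ ∨ v = pr t₂ :=
    fun v hv => cube_nbhd hci hcj hij
      (by rw [pr_c, Bool.not_not]) (pr_i s₁).symm (pr_j s₁).symm
      (by rw [pr_c, pr_c, Fs2c]) (by rw [pr_i, pr_i, Fs2i]) (by rw [pr_j, pr_j, F3])
      (by rw [pr_c, pr_c, Ft2c]) (by rw [pr_i, pr_i, Ft2i]) (by rw [pr_j, pr_j, Ft2j]) hv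
  have ht1_ne_pr : t₁ ≠ pr s₁ := by
    intro h
    have := congrFun h c
    rw [Ft1c, pr_c] at this
    exact bool_self_ne_not (s₁ c) this
  have main : ¬ ∃ (p : (cubeGraph 3).Walk s₁ t₁) (q : (cubeGraph 3).Walk s₂ t₂),
      p.IsPath ∧ q.IsPath ∧ ∀ v ∈ p.support, v ∉ q.support := by
    rintro ⟨p, q, hp, hq, hdisj⟩
    have hs1q : s₁ ∉ q.support := hdisj s₁ p.start_mem_support
    have ht1q : t₁ ∉ q.support := hdisj t₁ p.end_mem_support
    have hs2' : pr s₂ ∈ q.support := by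
      obtain ⟨w, hadj, hwq⟩ := second_vertex q h24
      rcases N2 w hadj with rfl | rfl | rfl
      · exact hwq
      · exact absurd hwq hs1q
      · exact absurd hwq ht1q
    have ht2' : pr t₂ ∈ q.support := by
      obtain ⟨w, hadj, hwq⟩ := second_vertex q.reverse (Ne.symm h24)
      rw [SimpleGraph.Walk.support_reverse, List.mem_reverse] at hwq
      rcases N3 w hadj with rfl | rfl | rfl
      · exact hwq
      · exact absurd hwq ht1q
      · exact absurd hwq hs1q
    have key : ∀ (u u' : Fin 3 → Bool) (w : (cubeGraph 3).Walk u u'),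
        (u = s₁ ∨ u = pr s₁) → u' = t₁ → (∀ v ∈ w.support, v ∉ q.support) → False := by
      intro u u' w
      induction w with
      | nil =>
        rintro (rfl | rfl) h _
        · exact h13 h
        · exact ht1_ne_pr h.symm
      | cons hadj w' ih =>
        rintro hu rfl hdj
        have hsub : ∀ v ∈ w'.support, v ∉ q.support := fun v hv =>
          hdj v (by rw [SimpleGraph.Walk.support_cons]; exact List.mem_cons_of_mem _ hv)
        rcases hu with rfl | rfl
        · rcases N1 _ hadj with rfl | rfl | rfl
          · exact ih (Or.inr rfl) rfl hsub
          · exact (hsub _ w'.start_mem_support) q.start_mem_support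
          · exact (hsub _ w'.start_mem_support) q.end_mem_support
        · rcases N4 _ hadj with rfl | rfl | rfl
          · exact ih (Or.inl rfl) rfl hsub
          · exact (hsub _ w'.start_mem_support) hs2'
          · exact (hsub _ w'.start_mem_support) ht2'
    exact key s₁ t₁ p (Or.inl rfl) rfl hdisj
  refine ⟨main, ?_⟩
  rintro ⟨-, h⟩
  have hinj : Function.Injective (Sum.elim ![s₁, s₂] ![t₁, t₂]) := by
    intro x y hxy
    rcases x with x | x <;> rcases y with y | y <;> fin_cases x <;> fin_cases y <;>
      simp only [Sum.elim_inl, Sum.elim_inr, Matrix.cons_val_zero, Matrix.cons_val_one,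
        Matrix.head_cons, Fin.isValue] at hxy ⊢ <;>
      first
        | rfl
        | exact absurd hxy h12 | exact absurd hxy.symm h12
        | exact absurd hxy h13 | exact absurd hxy.symm h13
        | exact absurd hxy h14 | exact absurd hxy.symm h14
        | exact absurd hxy h23 | exact absurd hxy.symm h23
        | exact absurd hxy h24 | exact absurd hxy.symm h24
        | exact absurd hxy h34 | exact absurd hxy.symm h34
  obtain ⟨P, hP, hD⟩ := h ![s₁, s₂] ![t₁, t₂] hinj
  exact main ⟨P 0, P 1, hP 0, hP 1, fun v hv => hD 0 1 (by decide) v hv⟩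
end

section
/- Let s_1, t_1, s_2, t_2, s_3, t_3 be six distinct vertices of the 3-cube graph Q_3, organised into the three pairs {s_1,t_1}, {s_2,t_2}, {s_3,t_3}. Then there exist two distinct indices i, j ∈ {1,2,3} such that it is NOT the case that the four vertices s_i, t_i, s_j, t_j all agree in some coordinate (i.e., lie in a common 2-face) with s_i nonadjacent to t_i and s_j nonadjacent to t_j. Equivalently, some two of the three pairs are not arranged in the cyclic order s_i, s_j, t_i, t_j in a 2-face of the cube. -/
lemma five_pigeon_dec : ∀ p q r u w : Bool × Bool,
    decide (p = q ∨ p = r ∨ p = u ∨ p = w ∨ q = r ∨ q = u ∨ q = w ∨ r = u ∨ r = w ∨ u = w) = true := by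
  decide

lemma five_pigeon (p q r u w : Bool × Bool) :
    p = q ∨ p = r ∨ p = u ∨ p = w ∨ q = r ∨ q = u ∨ q = w ∨ r = u ∨ r = w ∨ u = w :=
  of_decide_eq_true (five_pigeon_dec p q r u w)

lemma agree_unique (x y : Fin 3 → Bool) (hne : x ≠ y)
    (hnadj : ¬ (cubeGraph 3).Adj x y) (c c' : Fin 3)
    (hc : x c = y c) (hc' : x c' = y c') : c = c' := by
  by_contra hcc
  obtain ⟨i, hi1, hi2⟩ : ∃ i : Fin 3, i ≠ c ∧ i ≠ c' := by
    fin_cases c <;> fin_cases c' <;>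
      first
        | exact absurd rfl hcc
        | exact ⟨0, by decide, by decide⟩
        | exact ⟨1, by decide, by decide⟩
        | exact ⟨2, by decide, by decide⟩
  have hcov : ∀ j : Fin 3, j ≠ i → x j = y j := by
    intro j hj
    have : j = c ∨ j = c' := by
      fin_cases j <;> fin_cases c <;> fin_cases c' <;> fin_cases i <;> simp_all
    rcases this with rfl | rfl <;> assumption
  apply hnadj
  refine ⟨i, fun h => hne ?_, hcov⟩
  funext j
  by_cases hj : j = i
  · exact hj ▸ h
  · exact hcov j hj

lemma pigeonAux (a b c : Fin 3) (hcov : ∀ j : Fin 3, j = a ∨ j = b ∨ j = c)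
    (v0 v1 v2 v3 v4 : Fin 3 → Bool)
    (h01 : v0 c = v1 c) (h12 : v1 c = v2 c) (h23 : v2 c = v3 c) (h34 : v3 c = v4 c)
    (n01 : v0 ≠ v1) (n02 : v0 ≠ v2) (n03 : v0 ≠ v3) (n04 : v0 ≠ v4)
    (n12 : v1 ≠ v2) (n13 : v1 ≠ v3) (n14 : v1 ≠ v4)
    (n23 : v2 ≠ v3) (n24 : v2 ≠ v4) (n34 : v3 ≠ v4) : False := by
  have key : ∀ f f' : Fin 3 → Bool, f c = f' c → (f a, f b) = (f' a, f' b) → f = f' := by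
    intro f f' hc heq
    funext j
    rcases hcov j with rfl | rfl | rfl
    · exact congrArg Prod.fst heq
    · exact congrArg Prod.snd heq
    · exact hc
  rcases five_pigeon (v0 a, v0 b) (v1 a, v1 b) (v2 a, v2 b) (v3 a, v3 b) (v4 a, v4 b) with
    h | h | h | h | h | h | h | h | h | h
  · exact n01 (key _ _ h01 h)
  · exact n02 (key _ _ (h01.trans h12) h)
  · exact n03 (key _ _ (h01.trans (h12.trans h23)) h)
  · exact n04 (key _ _ (h01.trans (h12.trans (h23.trans h34))) h)
  · exact n12 (key _ _ h12 h)
  · exact n13 (key _ _ (h12.trans h23) h)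
  · exact n14 (key _ _ (h12.trans (h23.trans h34)) h)
  · exact n23 (key _ _ h23 h)
  · exact n24 (key _ _ (h23.trans h34) h)
  · exact n34 (key _ _ h34 h)

/-- Given three pairs `{s i, t i}` (`i : Fin 3`) of six distinct vertices of
the 3-cube, there are two distinct indices `i ≠ j` such that it is NOT the
case that `s i, t i, s j, t j` all agree in some coordinate (lie in a common
2-face) with `s i` nonadjacent to `t i` and `s j` nonadjacent to `t j`,
i.e. some two of the pairs are not arranged in the cyclic order
`s i, s j, t i, t j` in a 2-face of the cube. -/
theorem cube3_two_pairs_not_crossing (s t : Fin 3 → (Fin 3 → Bool))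
    (hinj : Function.Injective (Sum.elim s t)) :
    ∃ i j : Fin 3, i ≠ j ∧
      ¬ ((∃ c : Fin 3, s i c = t i c ∧ t i c = s j c ∧ s j c = t j c) ∧
          ¬ (cubeGraph 3).Adj (s i) (t i) ∧
          ¬ (cubeGraph 3).Adj (s j) (t j)) := by
  by_contra h
  push_neg at h
  have hst : ∀ i j : Fin 3, s i ≠ t j := by
    intro i j e
    have := hinj (a₁ := Sum.inl i) (a₂ := Sum.inr j) (by simpa using e)
    simp at this
  have hss : ∀ i j : Fin 3, i ≠ j → s i ≠ s j := by
    intro i j hij e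
    exact hij (Sum.inl.inj (hinj (a₁ := Sum.inl i) (a₂ := Sum.inl j) (by simpa using e)))
  have htt : ∀ i j : Fin 3, i ≠ j → t i ≠ t j := by
    intro i j hij e
    exact hij (Sum.inr.inj (hinj (a₁ := Sum.inr i) (a₂ := Sum.inr j) (by simpa using e)))
  obtain ⟨⟨c01, a1, a2, a3⟩, na0, na1⟩ := h 0 1 (by decide)
  obtain ⟨⟨c02, b1, b2, b3⟩, -, na2⟩ := h 0 2 (by decide)
  obtain ⟨⟨c12, d1, d2, d3⟩, -, -⟩ := h 1 2 (by decide)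
  have e1 : c01 = c02 := agree_unique _ _ (hst 0 0) na0 _ _ a1 b1
  have e2 : c01 = c12 := agree_unique _ _ (hst 1 1) na1 _ _ a3 d1
  subst e1
  subst e2
  obtain ⟨a, b, hcov⟩ : ∃ a b : Fin 3, ∀ j : Fin 3, j = a ∨ j = b ∨ j = c01 := by
    have : ∀ c : Fin 3, ∃ a b : Fin 3, ∀ j : Fin 3, j = a ∨ j = b ∨ j = c := by decide
    exact this c01
  exact pigeonAux a b c01 hcov (s 0) (t 0) (s 1) (t 1) (s 2) a1 a2 a3 d2
    (hst 0 0) (hss 0 1 (by decide)) (hst 0 1) (hss 0 2 (by decide))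
    (Ne.symm (hst 1 0)) (htt 0 1 (by decide)) (Ne.symm (hst 2 0))
    (hst 1 1) (hss 1 2 (by decide)) (Ne.symm (hst 2 1))
end

section
/- Let d ≥ 2 and let F be a proper face of the d-cube: the set of vertices of Q_d whose coordinates in a fixed nonempty set S ⊆ {1,…,d} take fixed prescribed values. Then the induced subgraph of the d-cube graph Q_d on the vertex set V(Q_d) \ F is (d−1)-connected. (This is the graph-level consequence of the paper's lemma that the antistar of a proper face of the d-cube is a strongly connected (d−1)-complex.) -/
namespace CubeAux

variable {d : ℕ}

/-- subcube with free coordinates `A`, base `g` -/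
def cb (A : Finset (Fin d)) (g : Fin d → Bool) : Set (Fin d → Bool) :=
  {x | ∀ i ∉ A, x i = g i}

/-- step relation within a set `s` -/
def Rel (s : Set (Fin d → Bool)) (x y : Fin d → Bool) : Prop :=
  x ∈ s ∧ y ∈ s ∧ (cubeGraph d).Adj x y

/-- reachability within `s` -/
def RIn (s : Set (Fin d → Bool)) : (Fin d → Bool) → (Fin d → Bool) → Prop :=
  Relation.ReflTransGen (Rel s)

lemma RIn.mono {s t : Set (Fin d → Bool)} (hst : s ⊆ t) {x y} (h : RIn s x y) :
    RIn t x y :=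
  Relation.ReflTransGen.mono (p := Rel t) (fun _ _ ⟨h1, h2, h3⟩ => ⟨hst h1, hst h2, h3⟩) x y h

lemma RIn.symm {s : Set (Fin d → Bool)} {x y} (h : RIn s x y) : RIn s y x :=
  by haveI : Std.Symm (Rel s) := ⟨fun _ _ ⟨h1, h2, h3⟩ => ⟨h2, h1, h3.symm⟩⟩
     exact (Relation.ReflTransGen.symmetric (r := Rel s)).symm x y h

lemma RIn.single {s : Set (Fin d → Bool)} {x y} (h : Rel s x y) : RIn s x y :=
  Relation.ReflTransGen.single h

lemma adj_update {x : Fin d → Bool} {i : Fin d} {v : Bool} (h : x i ≠ v) :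
    (cubeGraph d).Adj x (Function.update x i v) := by
  refine ⟨i, ?_, fun j hj => ?_⟩
  · simpa using h
  · simp [Function.update_apply, hj]

lemma adj_of_one_diff {x y : Fin d → Bool} {i : Fin d} (h : x i ≠ y i)
    (h2 : ∀ j, j ≠ i → x j = y j) : (cubeGraph d).Adj x y := ⟨i, h, h2⟩

lemma cb_update_mem {A : Finset (Fin d)} {g x : Fin d → Bool} (hx : x ∈ cb A g)
    {i : Fin d} (hi : i ∈ A) (v : Bool) : Function.update x i v ∈ cb A g := by
  intro j hj
  rw [Function.update_apply, if_neg (fun h : j = i => hj (h ▸ hi))]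
  exact hx j hj

lemma conn_of_rin {s : Set (Fin d → Bool)} (hne : s.Nonempty)
    (h : ∀ x ∈ s, ∀ y ∈ s, RIn s x y) : ((cubeGraph d).induce s).Connected := by
  rw [SimpleGraph.connected_iff]
  refine ⟨?_, ⟨⟨hne.choose, hne.choose_spec⟩⟩⟩
  have key : ∀ {x y}, RIn s x y → ∀ (hx : x ∈ s) (hy : y ∈ s),
      ((cubeGraph d).induce s).Reachable ⟨x, hx⟩ ⟨y, hy⟩ := by
    intro x y hxy
    induction hxy with
    | refl => intro hx hy; rfl
    | tail _ hbc ih =>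
      intro hx hy
      exact (ih hx hbc.1).trans (SimpleGraph.Adj.reachable (by exact hbc.2.2))
  intro ⟨x, hx⟩ ⟨y, hy⟩
  exact key (h x hx y hy) hx hy

/-- cardinality of a subcube -/
lemma cb_card (A : Finset (Fin d)) (g : Fin d → Bool) [Fintype (cb A g)] :
    Nat.card (cb A g) = 2 ^ A.card := by
  have e : cb A g ≃ (A → Bool) :=
    { toFun := fun x i => x.1 i.1
      invFun := fun h => ⟨fun i => if hi : i ∈ A then h ⟨i, hi⟩ else g i, by
        intro i hi; simp [cb, hi]⟩
      left_inv := by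
        rintro ⟨x, hx⟩
        ext i
        by_cases hi : i ∈ A
        · simp [hi]
        · simp [hi, hx i hi]
      right_inv := by
        intro h; funext i; simp }
  rw [Nat.card_congr e]
  simp [Nat.card_eq_fintype_card]

lemma cb_exists_avoid (A : Finset (Fin d)) (g : Fin d → Bool)
    (T : Finset (Fin d → Bool)) (hT : T.card < 2 ^ A.card) :
    ∃ x ∈ cb A g, x ∉ T := by
  classical
  have hfin : (cb A g).toFinset.card = 2 ^ A.card := by
    have := cb_card A g
    rw [Set.toFinset_card]; rwa [Nat.card_eq_fintype_card] at this
  have : 0 < ((cb A g).toFinset \ T).card := by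
    have := Finset.le_card_sdiff T (cb A g).toFinset
    omega
  obtain ⟨x, hx⟩ := Finset.card_pos.mp this
  rw [Finset.mem_sdiff, Set.mem_toFinset] at hx
  exact ⟨x, hx.1, hx.2⟩

lemma card_bad_le {V : Type*} [DecidableEq V] (W T : Finset V) (m : V → V)
    (h1 : Set.InjOn m W) (h2 : ∀ z ∈ W, m z ∉ W) :
    (W.filter (fun z => z ∈ T ∨ m z ∈ T)).card ≤ T.card := by
  apply Finset.card_le_card_of_injOn (fun z => if z ∈ T then z else m z)
  · intro z hz
    simp only [Finset.mem_coe, Finset.mem_filter] at hz ⊢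
    split
    · assumption
    · tauto
  · intro z hz w hw hzw
    rw [Finset.coe_filter, Set.mem_setOf_eq] at hz hw
    dsimp only at hzw
    split at hzw <;> split at hzw
    · exact hzw
    · exact absurd (hzw ▸ hz.1) (h2 w hw.1)
    · exact absurd (hzw.symm ▸ hw.1) (h2 z hz.1)
    · exact h1 hz.1 hw.1 hzw

end CubeAux

namespace CubeAux

variable {d : ℕ}

lemma cb_mono {A B : Finset (Fin d)} (hAB : A ⊆ B) {g : Fin d → Bool}
    (hg : ∀ i ∈ B, i ∉ A → True) : True := trivial

lemma cb_erase_subset {A : Finset (Fin d)} {i₀ : Fin d} (hi₀ : i₀ ∈ A) {g : Fin d → Bool}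
    {c : Bool} : cb (A.erase i₀) (Function.update g i₀ c) ⊆ cb A g := by
  intro u hu i hi
  have h1 : i ∉ A.erase i₀ := fun h => hi (Finset.mem_of_mem_erase h)
  have h2 : i ≠ i₀ := fun h => hi (h ▸ hi₀)
  have := hu i h1
  rwa [Function.update_apply, if_neg h2] at this

lemma mem_cb_erase {A : Finset (Fin d)} {i₀ : Fin d} (hi₀ : i₀ ∈ A) {g x : Fin d → Bool}
    {c : Bool} (hx : x ∈ cb A g) (hc : x i₀ = c) :
    x ∈ cb (A.erase i₀) (Function.update g i₀ c) := by
  intro i hi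
  rw [Function.update_apply]
  split
  · next h => rw [h, hc]
  · next h =>
    have : i ∉ A := by
      intro hiA
      exact hi (Finset.mem_erase.mpr ⟨h, hiA⟩)
    exact hx i this

lemma choose_side (a b t : ℕ) (h : a + b = t) : 2 * a ≤ t ∨ 2 * b ≤ t := by omega

lemma arith_side {x t a a' : ℕ} (h1 : 2 * x ≤ t) (h2 : t < a) (h3 : 2 ≤ a)
    (h4 : a' = a - 1) : x < a' := by omega

lemma arith_le {a' a n : ℕ} (h4 : a' = a - 1) (h5 : a ≤ n + 1) (h6 : 1 ≤ a) : a' ≤ n := by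
  omega

lemma arith_absurd {a' e t a : ℕ} (h : a' ≤ e) (he : e = t - 1) (h1 : 1 ≤ t)
    (ht : t < a) (ha : a' = a - 1) : False := by omega

lemma cube_conn (n : ℕ) : ∀ (A : Finset (Fin d)), A.card ≤ n →
    ∀ (g : Fin d → Bool) (T : Finset (Fin d → Bool)), T.card < A.card →
    ∀ x ∈ cb A g \ ↑T, ∀ y ∈ cb A g \ ↑T, RIn (cb A g \ ↑T) x y := by
  classical
  induction n with
  | zero => intro A hA g T hT; omega
  | succ n IH =>
    intro A hAn g T hT x hx y hy
    have hA1 : 1 ≤ A.card := by omega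
    by_cases hA : A.card = 1
    · -- base: two-point cube, T empty
      obtain ⟨i₀, rfl⟩ := Finset.card_eq_one.mp hA
      by_cases hxy : x = y
      · exact hxy ▸ Relation.ReflTransGen.refl
      · refine RIn.single ⟨hx, hy, ⟨i₀, ?_, fun j hj => ?_⟩⟩
        · intro h
          apply hxy
          funext j
          by_cases hj : j = i₀
          · rw [hj, h]
          · rw [hx.1 j (by simp [hj]), hy.1 j (by simp [hj])]
        · rw [hx.1 j (by simp [hj]), hy.1 j (by simp [hj])]
    · have hA2 : 2 ≤ A.card := by omega
      obtain ⟨i₀, hi₀⟩ := Finset.card_pos.mp (show 0 < A.card by omega)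
      -- choose side with fewer removed vertices
      have hsplit : (T.filter (fun z => z i₀ = true)).card
          + (T.filter (fun z => z i₀ = false)).card = T.card := by
        have h0 := Finset.card_filter_add_card_filter_not
          (s := T) (p := fun z => z i₀ = true)
        have h1 : T.filter (fun z => ¬ z i₀ = true) = T.filter (fun z => z i₀ = false) :=
          Finset.filter_congr (fun z _ => by simp)
        rw [h1] at h0
        exact h0
      obtain ⟨c, hc⟩ : ∃ c : Bool, 2 * (T.filter (fun z => z i₀ = c)).card ≤ T.card := by
        rcases choose_side _ _ _ hsplit with h | h
        · exact ⟨true, h⟩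
        · exact ⟨false, h⟩
      set A' := A.erase i₀ with hA'
      set gc := Function.update g i₀ c with hgc
      set TA := T.filter (fun z => z i₀ = c) with hTA
      have hA'card : A'.card = A.card - 1 := Finset.card_erase_of_mem hi₀
      have hTAcard : TA.card < A'.card := arith_side hc hT hA2 hA'card
      set s := cb A g \ ↑T with hs
      -- the A-side, with T removed, is connected by IH
      have hTeq : cb A' gc \ ↑TA = cb A' gc \ ↑T := by
        ext u
        simp only [Set.mem_diff]
        refine and_congr_right fun hu => ?_
        have hui : u i₀ = c := by
          have := hu i₀ (Finset.notMem_erase i₀ A)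
          rwa [hgc, Function.update_self] at this
        rw [hTA]
        simp [Finset.mem_filter, hui]
      have connA : ∀ x ∈ cb A' gc \ ↑T, ∀ y ∈ cb A' gc \ ↑T, RIn (cb A' gc \ ↑T) x y := by
        rw [← hTeq]
        exact IH A' (arith_le hA'card hAn hA1) gc TA hTAcard
      have hsub : cb A' gc \ ↑T ⊆ s := fun u hu => ⟨cb_erase_subset hi₀ hu.1, hu.2⟩
      -- every vertex of s reaches the A-side
      have key : ∀ x ∈ s, ∃ z ∈ cb A' gc \ ↑T, RIn s x z := by
        intro x hx
        obtain ⟨hxcb, hxT⟩ := hx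
        by_cases hx0 : x i₀ = c
        · exact ⟨x, ⟨mem_cb_erase hi₀ hxcb hx0, hxT⟩, Relation.ReflTransGen.refl⟩
        · set x' := Function.update x i₀ c with hx'def
          have hx'cb : x' ∈ cb A g := cb_update_mem hxcb hi₀ c
          have hadjx : (cubeGraph d).Adj x x' := adj_update hx0
          by_cases hx' : x' ∈ T
          · -- find a detour coordinate j
            have hgood : ∃ j ∈ A', Function.update x j (!x j) ∉ T ∧
                Function.update (Function.update x j (!x j)) i₀ c ∉ T := by
              by_contra hbad
              push_neg at hbad
              have hinj : A'.card ≤ (T.erase x').card := by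
                apply Finset.card_le_card_of_injOn
                  (fun j => if Function.update x j (!x j) ∈ T then Function.update x j (!x j)
                    else Function.update (Function.update x j (!x j)) i₀ c)
                · intro j hj
                  have hji₀ : j ≠ i₀ := Finset.ne_of_mem_erase hj
                  rw [Finset.mem_coe, Finset.mem_erase]
                  constructor
                  · -- value at j differs from x' at j
                    intro heq
                    have := congrFun heq j
                    beta_reduce at this
                    split at this <;>
                    · simp [Function.update_apply, hx'def, hji₀] at this
                  · beta_reduce
                    split
                    · assumption
                    · next h => exact hbad j hj h
                · intro j hj k hk hjk
                  rw [Finset.mem_coe] at hj hk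
                  by_contra hne
                  have hji₀ : j ≠ i₀ := Finset.ne_of_mem_erase hj
                  have hkj : k ≠ j := fun h => hne h.symm
                  have hjk' : j ≠ k := hne
                  have := congrFun hjk j
                  beta_reduce at this
                  split at this <;> split at this <;>
                  · simp [Function.update_apply, hji₀, hjk'] at this
              have hx'T : (T.erase x').card = T.card - 1 :=
                Finset.card_erase_of_mem hx'
              exact arith_absurd hinj hx'T (Finset.card_pos.mpr ⟨x', hx'⟩) hT hA'card
            obtain ⟨j, hjA', hyT, hy'T⟩ := hgood
            set yj := Function.update x j (!x j) with hyj
            set yj' := Function.update yj i₀ c with hyj'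
            have hjA : j ∈ A := Finset.mem_of_mem_erase hjA'
            have hji₀ : j ≠ i₀ := Finset.ne_of_mem_erase hjA'
            have hyjcb : yj ∈ cb A g := cb_update_mem hxcb hjA _
            have hyj'cb : yj' ∈ cb A g := cb_update_mem hyjcb hi₀ c
            have hyji₀ : yj i₀ ≠ c := by
              rw [hyj, Function.update_apply, if_neg (Ne.symm hji₀ : i₀ ≠ j)]
              exact hx0
            have hstep1 : Rel s x yj := ⟨⟨hxcb, hxT⟩, ⟨hyjcb, hyT⟩, adj_update (by simp)⟩
            have hstep2 : Rel s yj yj' := ⟨⟨hyjcb, hyT⟩, ⟨hyj'cb, hy'T⟩, adj_update hyji₀⟩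
            refine ⟨yj', ⟨?_, hy'T⟩, (RIn.single hstep1).trans (RIn.single hstep2)⟩
            exact mem_cb_erase hi₀ hyj'cb (by rw [hyj', Function.update_self])
          · refine ⟨x', ⟨mem_cb_erase hi₀ hx'cb (by rw [hx'def, Function.update_self]), hx'⟩,
              RIn.single ⟨⟨hxcb, hxT⟩, ⟨hx'cb, hx'⟩, hadjx⟩⟩
      obtain ⟨zx, hzx, hxzx⟩ := key x hx
      obtain ⟨zy, hzy, hyzy⟩ := key y hy
      exact (hxzx.trans ((connA zx hzx zy hzy).mono hsub)).trans hyzy.symm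

end CubeAux

namespace CubeAux

variable {d : ℕ}

lemma cb_update_base {A : Finset (Fin d)} {h u : Fin d → Bool} (hu : u ∈ cb A h)
    {i₀ : Fin d} (hi₀ : i₀ ∉ A) (v : Bool) :
    Function.update u i₀ v ∈ cb A (Function.update h i₀ v) := by
  intro i hi
  rw [Function.update_apply, Function.update_apply]
  split
  · rfl
  · exact hu i hi

lemma bool_eq_not {a b : Bool} (h : ¬ a = b) : a = !b := by
  cases a <;> cases b <;> simp_all

lemma anti_arith {ta t a a' : ℕ} (h1 : ta ≤ t - 1) (h2 : 1 ≤ t) (h3 : t + 2 ≤ a)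
    (h4 : a' = a - 1) : ta + 2 ≤ a' := by omega

lemma anti_conn (n : ℕ) : ∀ (A S : Finset (Fin d)), A.card ≤ n → S.Nonempty → S ⊆ A →
    ∀ (g f : Fin d → Bool) (T : Finset (Fin d → Bool)), T.card + 2 ≤ A.card →
    (∀ x ∈ (cb A g ∩ {u | ¬ ∀ i ∈ S, u i = f i}) \ ↑T,
     ∀ y ∈ (cb A g ∩ {u | ¬ ∀ i ∈ S, u i = f i}) \ ↑T,
       RIn ((cb A g ∩ {u | ¬ ∀ i ∈ S, u i = f i}) \ ↑T) x y) ∧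
    ((cb A g ∩ {u | ¬ ∀ i ∈ S, u i = f i}) \ ↑T).Nonempty := by
  classical
  induction n with
  | zero => intro A S hA hS hSA g f T hT; omega
  | succ n IH =>
    intro A S hAn hS hSA g f T hT
    obtain ⟨i₀, hi₀⟩ := hS
    have hi₀A : i₀ ∈ A := hSA hi₀
    set s := (cb A g ∩ {u | ¬ ∀ i ∈ S, u i = f i}) \ ↑T with hsdef
    set A' := A.erase i₀ with hA'def
    have hA'card : A'.card = A.card - 1 := Finset.card_erase_of_mem hi₀A
    set gB := Function.update g i₀ (!f i₀) with hgBdef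
    set sB := cb A' gB \ ↑T with hsBdef
    have hTB : T.card < A'.card := by omega
    have connB : ∀ x ∈ sB, ∀ y ∈ sB, RIn sB x y :=
      cube_conn A'.card A' le_rfl gB T hTB
    have neB : sB.Nonempty := by
      obtain ⟨z, hz1, hz2⟩ := cb_exists_avoid A' gB T
        (by have := Nat.lt_two_pow_self (n := A'.card); omega)
      exact ⟨z, hz1, hz2⟩
    -- facts about members of the B-side
    have hBi₀ : ∀ u ∈ cb A' gB, u i₀ = !f i₀ := by
      intro u hu
      have := hu i₀ (Finset.notMem_erase i₀ A)
      rwa [hgBdef, Function.update_self] at this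
    have hsBsub : sB ⊆ s := by
      rintro u ⟨hu, huT⟩
      refine ⟨⟨cb_erase_subset hi₀A hu, fun hall => ?_⟩, huT⟩
      have h1 := hall i₀ hi₀
      have h2 := hBi₀ u hu
      rw [h1] at h2
      simp at h2
    -- every vertex of s reaches sB
    have key : ∀ x ∈ s, ∃ z ∈ sB, RIn s x z := by
      rintro x ⟨⟨hxcb, hxface⟩, hxT⟩
      by_cases hx0 : x i₀ = f i₀
      · -- x on the face side
        set x' := Function.update x i₀ (!f i₀) with hx'def
        have hx'cb : x' ∈ cb A g := cb_update_mem hxcb hi₀A _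
        have hx'B : x' ∈ cb A' gB := by
          rw [hsBdef] at *
          have h1 : x ∈ cb A' (Function.update g i₀ (f i₀)) :=
            mem_cb_erase hi₀A hxcb hx0
          have h2 := cb_update_base h1 (Finset.notMem_erase i₀ A) (!f i₀)
          rwa [Function.update_idem] at h2
        have hadjx : (cubeGraph d).Adj x x' := by
          apply adj_update
          rw [hx0]
          simp
        by_cases hx'T : x' ∈ T
        · -- the mirror is removed: go through the face-avoiding side
          push_neg at hxface
          obtain ⟨j, hjS, hjx⟩ := hxface
          have hji₀ : j ≠ i₀ := by
            intro h
            rw [h, hx0] at hjx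
            exact hjx rfl
          have hjS' : j ∈ S.erase i₀ := Finset.mem_erase.mpr ⟨hji₀, hjS⟩
          have hjA' : j ∈ A' := Finset.mem_erase.mpr ⟨hji₀, hSA hjS⟩
          set TA := T.filter (fun z => z i₀ = f i₀) with hTAdef
          have hTAsub : TA ⊆ T.erase x' := by
            intro u hu
            rw [hTAdef, Finset.mem_filter] at hu
            refine Finset.mem_erase.mpr ⟨?_, hu.1⟩
            intro h
            have := hu.2
            rw [h, hx'def, Function.update_self] at this
            simp at this
          have hTAcard : TA.card ≤ T.card - 1 := by
            have h1 := Finset.card_le_card hTAsub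
            have h2 : (T.erase x').card = T.card - 1 := Finset.card_erase_of_mem hx'T
            omega
          set gA := Function.update g i₀ (f i₀) with hgAdef
          have hIH := IH A' (S.erase i₀) (by omega) ⟨j, hjS'⟩
            (Finset.erase_subset_erase i₀ hSA) gA f TA
            (anti_arith hTAcard (Finset.card_pos.mpr ⟨x', hx'T⟩) hT hA'card)
          obtain ⟨connA, -⟩ := hIH
          set sA := (cb A' gA ∩ {u | ¬ ∀ i ∈ S.erase i₀, u i = f i}) \ ↑TA with hsAdef
          -- members of the A-side antistar
          have hAi₀ : ∀ u ∈ cb A' gA, u i₀ = f i₀ := by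
            intro u hu
            have := hu i₀ (Finset.notMem_erase i₀ A)
            rwa [hgAdef, Function.update_self] at this
          have hsAsub : sA ⊆ s := by
            rintro u ⟨⟨hu1, hu2⟩, hu3⟩
            refine ⟨⟨cb_erase_subset hi₀A hu1, fun hall => ?_⟩, fun huT => ?_⟩
            · exact hu2 (fun i hiS => hall i (Finset.mem_of_mem_erase hiS))
            · exact hu3 (Finset.mem_coe.mpr
                (Finset.mem_filter.mpr ⟨Finset.mem_coe.mp huT, hAi₀ u hu1⟩))
          have hxA : x ∈ sA := by
            refine ⟨⟨mem_cb_erase hi₀A hxcb hx0, fun hall => hjx (hall j hjS')⟩, fun hxTA => ?_⟩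
            exact hxT (Finset.filter_subset _ _ hxTA)
          -- find a good crossing vertex in the subcube where coordinate j is wrong
          set W := cb (A'.erase j) (Function.update gA j (!f j)) with hWdef
          have hWcard : W.toFinset.card = 2 ^ (A'.erase j).card := by
            rw [Set.toFinset_card]
            have := cb_card (A'.erase j) (Function.update gA j (!f j))
            rwa [Nat.card_eq_fintype_card] at this
          have hWi₀ : ∀ u ∈ W, u i₀ = f i₀ := by
            intro u hu
            apply hAi₀
            exact cb_erase_subset hjA' hu
          have hWj : ∀ u ∈ W, u j = !f j := by
            intro u hu
            have := hu j (Finset.notMem_erase j A')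
            rwa [Function.update_self] at this
          have hgood : ∃ z ∈ W, z ∉ T ∧ Function.update z i₀ (!f i₀) ∉ T := by
            by_contra hbad
            push_neg at hbad
            have hfilt : W.toFinset.filter
                (fun z => z ∈ T ∨ Function.update z i₀ (!f i₀) ∈ T) = W.toFinset := by
              apply Finset.filter_eq_self.mpr
              intro z hz
              rw [Set.mem_toFinset] at hz
              by_cases hzT : z ∈ T
              · exact Or.inl hzT
              · exact Or.inr (hbad z hz hzT)
            have hble : (W.toFinset.filter
                (fun z => z ∈ T ∨ Function.update z i₀ (!f i₀) ∈ T)).card ≤ T.card := by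
              apply card_bad_le
              · intro z hz w hw hzw
                rw [Finset.mem_coe, Set.mem_toFinset] at hz hw
                beta_reduce at hzw
                funext i
                by_cases hii₀ : i = i₀
                · rw [hii₀, hWi₀ z hz, hWi₀ w hw]
                · have := congrFun hzw i
                  rwa [Function.update_apply, Function.update_apply,
                    if_neg hii₀, if_neg hii₀] at this
              · intro z hz hz'
                rw [Set.mem_toFinset] at hz hz'
                have h1 := hWi₀ _ hz'
                rw [Function.update_self] at h1
                simp at h1
            have hcard2 : (A'.erase j).card = A.card - 2 := by
              rw [Finset.card_erase_of_mem hjA']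
              omega
            rw [hfilt, hWcard, hcard2] at hble
            have := Nat.lt_two_pow_self (n := A.card - 2)
            omega
          obtain ⟨z, hzW, hzT, hz'T⟩ := hgood
          set z' := Function.update z i₀ (!f i₀) with hz'def
          have hzA' : z ∈ cb A' gA := cb_erase_subset hjA' hzW
          have hzsA : z ∈ sA := by
            refine ⟨⟨hzA', fun hall => ?_⟩, fun hzTA => hzT (Finset.filter_subset _ _ hzTA)⟩
            have h1 := hall j hjS'
            have h2 := hWj z hzW
            rw [h1] at h2
            simp at h2
          have hz'B : z' ∈ cb A' gB := by
            have h2 := cb_update_base hzA' (Finset.notMem_erase i₀ A) (!f i₀)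
            rwa [hgAdef, Function.update_idem] at h2
          have hz'sB : z' ∈ sB := ⟨hz'B, hz'T⟩
          have hadj : (cubeGraph d).Adj z z' := by
            apply adj_update
            rw [hWi₀ z hzW]
            simp
          refine ⟨z', hz'sB, ?_⟩
          have h1 : RIn s x z := (connA x hxA z hzsA).mono hsAsub
          exact h1.trans (RIn.single ⟨hsAsub hzsA, hsBsub hz'sB, hadj⟩)
        · -- the mirror is available: cross directly
          have hx'sB : x' ∈ sB := ⟨hx'B, hx'T⟩
          exact ⟨x', hx'sB, RIn.single ⟨⟨⟨hxcb, hxface⟩, hxT⟩, hsBsub hx'sB, hadjx⟩⟩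
      · -- x already on the B side
        have hxB : x ∈ sB := ⟨mem_cb_erase hi₀A hxcb (bool_eq_not hx0), hxT⟩
        exact ⟨x, hxB, Relation.ReflTransGen.refl⟩
    constructor
    · intro x hx y hy
      obtain ⟨zx, hzx, hxzx⟩ := key x hx
      obtain ⟨zy, hzy, hyzy⟩ := key y hy
      exact (hxzx.trans ((connB zx hzx zy hzy).mono hsBsub)).trans hyzy.symm
    · exact ⟨neB.choose, hsBsub neB.choose_spec⟩

end CubeAux

open CubeAux in
/-- Let `F` be a proper face of the `d`-cube (`d ≥ 2`): the set of vertices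
whose coordinates in a fixed nonempty set `S` of coordinates take prescribed
values given by `f`. Then the subgraph of the `d`-cube graph induced on the
complement of `F` is `(d-1)`-connected. -/
theorem cube_antistar_connected (d : ℕ) (hd : 2 ≤ d)
    (S : Finset (Fin d)) (hS : S.Nonempty) (f : Fin d → Bool) :
    IsNConnected
      ((cubeGraph d).induce ({x : Fin d → Bool | ∀ i ∈ S, x i = f i}ᶜ))
      (d - 1) := by

  classical
  obtain ⟨i₀, hi₀⟩ := hS
  set s₀ : Set (Fin d → Bool) := {x : Fin d → Bool | ∀ i ∈ S, x i = f i}ᶜ with hs₀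
  -- the face-free set contains a full subcube of dimension d-1
  have hsub : cb (Finset.univ.erase i₀) (Function.update f i₀ (!f i₀)) ⊆ s₀ := by
    intro u hu
    have hui₀ : u i₀ = !f i₀ := by
      have := hu i₀ (Finset.notMem_erase i₀ Finset.univ)
      rwa [Function.update_self] at this
    intro hall
    have := hall i₀ hi₀
    rw [this] at hui₀
    simp at hui₀
  constructor
  · -- cardinality bound
    have h1 : Nat.card (cb (Finset.univ.erase i₀) (Function.update f i₀ (!f i₀)))
        = 2 ^ (d - 1) := by
      rw [cb_card]
      congr 1
      rw [Finset.card_erase_of_mem (Finset.mem_univ i₀), Finset.card_univ,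
        Fintype.card_fin]
    have h2 : (cb (Finset.univ.erase i₀) (Function.update f i₀ (!f i₀))).toFinset
        ⊆ s₀.toFinset := Set.toFinset_subset_toFinset.mpr hsub
    have h3 := Finset.card_le_card h2
    rw [Nat.card_eq_fintype_card, ← Set.toFinset_card] at h1
    have h4 : Nat.card s₀ = s₀.toFinset.card := by
      rw [Nat.card_eq_fintype_card, Set.toFinset_card]
    have h5 : d ≤ 2 ^ (d - 1) := by
      have := Nat.lt_two_pow_self (n := d - 1)
      omega
    omega
  · intro T hT
    -- pass to the ambient type
    set T' : Finset (Fin d → Bool) := T.map ⟨Subtype.val, Subtype.val_injective⟩ with hT'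
    have hT'card : T'.card = T.card := Finset.card_map _
    have hmemT' : ∀ (v : Fin d → Bool) (hv : v ∈ s₀), v ∈ T' ↔ ⟨v, hv⟩ ∈ T := by
      intro v hv
      rw [hT', Finset.mem_map]
      constructor
      · rintro ⟨u, hu, rfl⟩
        convert hu
        rfl
      · intro h
        exact ⟨⟨v, hv⟩, h, rfl⟩
    have himg : Subtype.val '' ((↑T : Set s₀)ᶜ) = s₀ \ ↑T' := by
      ext v
      constructor
      · rintro ⟨u, hu, rfl⟩
        exact ⟨u.2, fun hx => hu ((hmemT' u.1 u.2).mp hx)⟩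
      · rintro ⟨hv, hvT⟩
        exact ⟨⟨v, hv⟩, fun hx => hvT ((hmemT' v hv).mpr hx), rfl⟩
    -- the iso between the double induced subgraph and the induced subgraph
    let e : ((↑T : Set s₀)ᶜ : Set s₀) ≃ (Subtype.val '' ((↑T : Set s₀)ᶜ) : Set (Fin d → Bool)) :=
      Equiv.Set.image Subtype.val _ Subtype.val_injective
    have hiso : (((cubeGraph d).induce s₀).induce ((↑T : Set s₀)ᶜ)) ≃g
        ((cubeGraph d).induce (Subtype.val '' ((↑T : Set s₀)ᶜ))) :=
      ⟨e, fun {a b} => Iff.rfl⟩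
    rw [hiso.connected_iff, himg]
    -- now apply the antistar connectivity lemma
    have hset : s₀ \ ↑T' = (cb Finset.univ f ∩ {u | ¬ ∀ i ∈ S, u i = f i}) \ ↑T' := by
      congr 1
      ext u
      simp only [hs₀, Set.mem_compl_iff, Set.mem_setOf_eq, Set.mem_inter_iff, cb]
      constructor
      · intro h
        exact ⟨fun i hi => absurd hi (by simp), h⟩
      · intro h
        exact h.2
    rw [hset]
    have hcard : T'.card + 2 ≤ (Finset.univ : Finset (Fin d)).card := by
      rw [Finset.card_univ, Fintype.card_fin, hT'card]
      omega
    obtain ⟨hconn, hne⟩ := anti_conn ((Finset.univ : Finset (Fin d)).card) Finset.univ S le_rfl ⟨i₀, hi₀⟩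
      (Finset.subset_univ S) f f T' hcard
    exact conn_of_rin hne hconn
end
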